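/- arXiv:1806.01636 — 2 statements merged into one kernel-verified Lean document; each statement's English description precedes it below -/
import Mathlib

section
/- (In classical logic.) Let f : ℝ → ℝ be a function that is uniformly continuous on every closed bounded interval. Then there is a refinement morphism g from σ_ℝ to σ_ℝ such that ρ(g(x)) = f(ρ(x)) for every point x of σ_ℝ. -/
/-! # Natural Topology: basic framework (Waaldijk) -/

/-- A pre-natural space: a countable set of basic dots with a decidable
pre-apartness `apart` and a decidable refinement partial order `refines`. -/
structure PreNaturalSpace (V : Type) : Type where
  countable' : Countable V
  apart : V → V → Prop
  refines : V → V → Prop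
  apart_dec : DecidableRel apart
  refines_dec : DecidableRel refines
  apart_symm : ∀ a b, apart a b → apart b a
  apart_irrefl : ∀ a, ¬ apart a a
  apart_mono : ∀ a b c, refines a b → apart c b → apart c a
  refines_refl : ∀ a, refines a a
  refines_trans : ∀ a b c, refines a b → refines b c → refines a c
  refines_antisymm : ∀ a b, refines a b → refines b a → a = b

namespace PreNaturalSpace

variable {V W : Type}

/-- `a ≺ b` : strict refinement. -/
def strict (P : PreNaturalSpace V) (a b : V) : Prop := P.refines a b ∧ a ≠ b

/-- A point is a shrinking sequence of dots deciding every apart pair of dots. -/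
structure IsPoint (P : PreNaturalSpace V) (p : ℕ → V) : Prop where
  mono : ∀ n, P.refines (p (n + 1)) (p n)
  shrink : ∀ n, ∃ m, P.strict (p m) (p n)
  decides : ∀ a b, P.apart a b → ∃ m, P.apart (p m) a ∨ P.apart (p m) b

/-- The set of points of a pre-natural space. -/
def Pt (P : PreNaturalSpace V) : Type := { p : ℕ → V // P.IsPoint p }

/-- `p` begins with the dot `a` : some `p m ≺ a`. -/
def begins (P : PreNaturalSpace V) (p : ℕ → V) (a : V) : Prop := ∃ m, P.strict (p m) a

/-- Apartness between a dot and a point. -/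
def dApart (P : PreNaturalSpace V) (a : V) (p : ℕ → V) : Prop := ∃ m, P.apart (p m) a

/-- Apartness between points. -/
def pApart (P : PreNaturalSpace V) (p q : P.Pt) : Prop := ∃ n, P.apart (p.1 n) (q.1 n)

/-- Equivalence of points: the negation of apartness. -/
def pEquiv (P : PreNaturalSpace V) (p q : P.Pt) : Prop := ¬ P.pApart p q

variable (P : PreNaturalSpace V)

lemma refines_of_le {p : ℕ → V} (hp : ∀ n, P.refines (p (n + 1)) (p n)) :
    ∀ {m k : ℕ}, m ≤ k → P.refines (p k) (p m) := by
  intro m k h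
  induction h with
  | refl => exact P.refines_refl _
  | step h ih => exact P.refines_trans _ _ _ (hp _) ih

lemma begins_mono {z : ℕ → V} (hz : P.IsPoint z) {a b : V} (hab : P.refines a b)
    (h : P.begins z a) : P.begins z b := by
  obtain ⟨j, hj1, hj2⟩ := h
  have hzb : P.refines (z j) b := P.refines_trans _ _ _ hj1 hab
  by_cases he : z j = b
  · obtain ⟨i, hi1, hi2⟩ := hz.shrink j
    exact ⟨i, P.refines_trans _ _ _ hi1 hzb, fun h' => hi2 (h'.trans he.symm)⟩
  · exact ⟨j, hzb, he⟩

/-- The natural (apartness) topology as a predicate on subsets of the point set. -/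
def NatOpen (U : Set P.Pt) : Prop :=
  ∀ x ∈ U, ∀ y : P.Pt, P.pApart y x ∨ ∃ m, { z : P.Pt | P.begins z.1 (y.1 m) } ⊆ U

instance instTopPt : TopologicalSpace P.Pt where
  IsOpen := P.NatOpen
  isOpen_univ := fun _ _ _ => Or.inr ⟨0, fun _ _ => trivial⟩
  isOpen_inter := by
    intro U U' hU hU' x hx y
    rcases hU x hx.1 y with h | ⟨m, hm⟩
    · exact Or.inl h
    rcases hU' x hx.2 y with h | ⟨k, hk⟩
    · exact Or.inl h
    refine Or.inr ⟨max m k, fun z hz => ⟨hm ?_, hk ?_⟩⟩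
    · exact P.begins_mono z.2 (P.refines_of_le y.2.mono (le_max_left m k)) hz
    · exact P.begins_mono z.2 (P.refines_of_le y.2.mono (le_max_right m k)) hz
  isOpen_sUnion := by
    intro S hS x hx y
    obtain ⟨U, hU, hxU⟩ := hx
    rcases hS U hU x hxU y with h | ⟨m, hm⟩
    · exact Or.inl h
    · exact Or.inr ⟨m, fun z hz => ⟨U, hU, hm hz⟩⟩

lemma pEquiv_refl (p : P.Pt) : P.pEquiv p p := fun ⟨_, h⟩ => P.apart_irrefl _ h

lemma pEquiv_symm {p q : P.Pt} (h : P.pEquiv p q) : P.pEquiv q p :=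
  fun ⟨n, hn⟩ => h ⟨n, P.apart_symm _ _ hn⟩

lemma pEquiv_trans {p q r : P.Pt} (hpq : P.pEquiv p q) (hqr : P.pEquiv q r) :
    P.pEquiv p r := by
  rintro ⟨n, hn⟩
  obtain ⟨m, hm⟩ := q.2.decides (p.1 n) (r.1 n) hn
  rcases hm with hm | hm
  · -- q.1 m apart from p.1 n
    refine hpq ⟨max m n, ?_⟩
    have h1 : P.apart (p.1 n) (q.1 (max m n)) :=
      P.apart_mono _ _ _ (P.refines_of_le q.2.mono (le_max_left m n)) (P.apart_symm _ _ hm)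
    have h2 : P.apart (q.1 (max m n)) (p.1 (max m n)) :=
      P.apart_mono _ _ _ (P.refines_of_le p.2.mono (le_max_right m n)) (P.apart_symm _ _ h1)
    exact P.apart_symm _ _ h2
  · refine hqr ⟨max m n, ?_⟩
    have h1 : P.apart (r.1 n) (q.1 (max m n)) :=
      P.apart_mono _ _ _ (P.refines_of_le q.2.mono (le_max_left m n)) (P.apart_symm _ _ hm)
    exact P.apart_mono _ _ _ (P.refines_of_le r.2.mono (le_max_right m n))
      (P.apart_symm _ _ h1)

/-- The setoid of points modulo `≡`. -/
def ptSetoid : Setoid P.Pt :=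
  ⟨P.pEquiv, ⟨P.pEquiv_refl, P.pEquiv_symm, P.pEquiv_trans⟩⟩

/-- `â` : the set of points beginning with the dot `a`. -/
def hatSet (a : V) : Set P.Pt := { p | P.begins p.1 a }

/-- `ā` : the `≡`-closure of `â`. -/
def barSet (a : V) : Set P.Pt := { p | ∃ q : P.Pt, P.begins q.1 a ∧ P.pEquiv p q }

/-- A natural space is basic-open when every `ā` is open. -/
def BasicOpen : Prop := ∀ a : V, IsOpen (P.barSet a)

/-- Existence of a maximal dot. -/
def HasMaxDot : Prop := ∃ m, ∀ a, P.refines a m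

/-- Every basic dot begins at least one point. -/
def AllDotsInhabited : Prop := ∀ a : V, ∃ p : ℕ → V, P.IsPoint p ∧ P.begins p a

/-- The conditions making the point set of a pre-natural space a natural space. -/
def IsNaturalSpace : Prop := P.HasMaxDot ∧ P.AllDotsInhabited

end PreNaturalSpace

/-- A refinement morphism between (pre-)natural spaces: a map on dots sending
points to points and reflecting apartness of points. -/
structure RefMorphism {V W : Type} (P : PreNaturalSpace V) (Q : PreNaturalSpace W) : Type where
  toFun : V → W
  maps_points : ∀ p : ℕ → V, P.IsPoint p → Q.IsPoint (fun n => toFun (p n))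
  reflects_apart : ∀ p q : ℕ → V, P.IsPoint p → P.IsPoint q →
    (∃ n, Q.apart (toFun (p n)) (toFun (q n))) → ∃ n, P.apart (p n) (q n)

/-- The induced map on points of a refinement morphism. -/
def RefMorphism.pointMap {V W : Type} {P : PreNaturalSpace V} {Q : PreNaturalSpace W}
    (f : RefMorphism P Q) (p : P.Pt) : Q.Pt :=
  ⟨fun n => f.toFun (p.1 n), f.maps_points p.1 p.2⟩

namespace PreNaturalSpace

variable {V W : Type} (P : PreNaturalSpace V)

/-- Restriction of a pre-natural space to a subset of dots. -/
noncomputable def restrict (S : Set V) : PreNaturalSpace S where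
  countable' := by haveI := P.countable'; exact inferInstance
  apart a b := P.apart a.1 b.1
  refines a b := P.refines a.1 b.1
  apart_dec := Classical.decRel _
  refines_dec := Classical.decRel _
  apart_symm _ _ h := P.apart_symm _ _ h
  apart_irrefl a := P.apart_irrefl a.1
  apart_mono _ _ _ h1 h2 := P.apart_mono _ _ _ h1 h2
  refines_refl a := P.refines_refl a.1
  refines_trans _ _ _ h1 h2 := P.refines_trans _ _ _ h1 h2
  refines_antisymm _ _ h1 h2 := Subtype.ext (P.refines_antisymm _ _ h1 h2)

/-! ## Trail spaces -/

/-- A `≺`-trail: a finite strictly refining sequence `a₀ ≻ a₁ ≻ …`. -/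
def Trail : Type := { l : List V // l.Chain' fun a b => P.strict b a }

lemma strict_trans_flip : Transitive (fun a b : V => P.strict b a) := by
  rintro a b c ⟨h1, h1'⟩ ⟨h2, h2'⟩
  refine ⟨P.refines_trans _ _ _ h2 h1, fun he => ?_⟩
  exact h2' (P.refines_antisymm _ _ h2 (he ▸ h1))

lemma last_refines_of_prefix {a b : List V}
    (ha : a.Chain' fun x y => P.strict y x) (hpre : b <+: a)
    {x y : V} (hx : x ∈ a.getLast?) (hy : y ∈ b.getLast?) :
    P.refines x y := by
  haveI : IsTrans V (fun x y : V => P.strict y x) := ⟨fun _ _ _ h1 h2 => P.strict_trans_flip h1 h2⟩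
  have hpw : a.Pairwise fun x y => P.strict y x := List.isChain_iff_pairwise.mp ha
  obtain ⟨t, rfl⟩ := hpre
  rcases eq_or_ne t [] with rfl | ht
  · rw [List.append_nil] at hx
    have : x = y := by
      rw [Option.mem_def] at hx hy
      exact Option.some_injective _ (hx ▸ hy ▸ rfl)
    exact this ▸ P.refines_refl x
  · rw [List.getLast?_append_of_ne_nil _ ht] at hx
    have hxt : x ∈ t := List.mem_of_mem_getLast? hx
    have hyb : y ∈ b := List.mem_of_mem_getLast? hy
    have := (List.pairwise_append.mp hpw).2.2 y hyb x hxt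
    exact this.1

/-- The trail space of a pre-natural space: dots are `≺`-trails, with
`a ⊑* b` iff `b` is an initial segment of `a`, and `a #* b` iff the last
dots of `a` and `b` are apart. -/
noncomputable def trailSpace : PreNaturalSpace P.Trail where
  countable' := by haveI := P.countable'; exact inferInstanceAs (Countable
    { l : List V // l.Chain' fun a b => P.strict b a })
  apart a b := ∃ x ∈ a.1.getLast?, ∃ y ∈ b.1.getLast?, P.apart x y
  refines a b := b.1 <+: a.1
  apart_dec := Classical.decRel _
  refines_dec := Classical.decRel _
  apart_symm := by
    rintro a b ⟨x, hx, y, hy, hxy⟩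
    exact ⟨y, hy, x, hx, P.apart_symm _ _ hxy⟩
  apart_irrefl := by
    rintro a ⟨x, hx, y, hy, hxy⟩
    rw [Option.mem_def] at hx hy
    have : x = y := Option.some_injective _ (hx ▸ hy ▸ rfl)
    exact P.apart_irrefl x (this ▸ hxy)
  apart_mono := by
    rintro a b c hab ⟨x, hx, y, hy, hxy⟩
    have hbne : b.1 ≠ [] := by
      intro h
      rw [h] at hy
      simp at hy
    have hane : a.1 ≠ [] := by
      intro h
      exact hbne (List.prefix_nil.mp (h ▸ hab))
    obtain ⟨z, hz⟩ : ∃ z, z ∈ a.1.getLast? := by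
      rcases h : a.1.getLast? with _ | z
      · exact absurd (List.getLast?_eq_none_iff.mp h) hane
      · exact ⟨z, rfl⟩
    have hzy : P.refines z y := P.last_refines_of_prefix a.2 hab hz hy
    exact ⟨x, hx, z, hz, P.apart_mono _ _ _ hzy hxy⟩
  refines_refl a := List.prefix_refl a.1
  refines_trans _ _ _ h1 h2 := h2.trans h1
  refines_antisymm a b h1 h2 :=
    Subtype.ext (h2.eq_of_length (le_antisymm h2.length_le h1.length_le))

end PreNaturalSpace

open Classical in
/-- `p♯(n)` : the `≺`-trail obtained from `p₀, …, p_{n-1}` by deleting repetitions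
(for a shrinking sequence `p`, repetitions are consecutive). -/
noncomputable def segList {V : Type} (p : ℕ → V) : ℕ → List V
  | 0 => []
  | n + 1 =>
    if (segList p n).getLast? = some (p n) then segList p n
    else segList p n ++ [p n]

namespace PreNaturalSpace

variable {V W : Type} (P : PreNaturalSpace V)

/-- The map on trail dots sending a nonempty trail to its last element and
the empty trail to `m`. -/
def lastDot (m : V) (q : P.Trail) : V := q.1.getLast?.getD m

/-- `g` is the point map induced by a trail morphism `f` (a refinement morphism
on the trail space): `g p = f (p♯(0)), f (p♯(1)), …`. -/
def InducedByTrailMorphism (Q : PreNaturalSpace W) (f : RefMorphism P.trailSpace Q)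
    (g : P.Pt → Q.Pt) : Prop :=
  ∀ p : P.Pt, ∃ t : P.trailSpace.Pt, (∀ n, (t.1 n).1 = segList p.1 n) ∧ g p = f.pointMap t

/-- `g` is a natural morphism map: induced by a refinement morphism or by a trail morphism. -/
def IsNaturalMorphismMap (Q : PreNaturalSpace W) (g : P.Pt → Q.Pt) : Prop :=
  (∃ f : RefMorphism P Q, ∀ p, g p = f.pointMap p) ∨
  (∃ f : RefMorphism P.trailSpace Q, P.InducedByTrailMorphism Q f g)

/-- Two natural spaces are isomorphic: natural morphisms both ways, inverse up to `≡`. -/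
def AreIsomorphic (Q : PreNaturalSpace W) : Prop :=
  ∃ (f : P.Pt → Q.Pt) (g : Q.Pt → P.Pt),
    P.IsNaturalMorphismMap Q f ∧ Q.IsNaturalMorphismMap P g ∧
    (∀ x, P.pEquiv (g (f x)) x) ∧ (∀ y, Q.pEquiv (f (g y)) y)

/-- A natural space is a basic neighborhood space iff it is isomorphic to a basic-open space. -/
def IsBasicNbhdSpace : Prop :=
  ∃ (W' : Type) (Q : PreNaturalSpace W'), Q.IsNaturalSpace ∧ Q.BasicOpen ∧ P.AreIsomorphic Q

/-! ## Trees, treas, spreads, spraids, fans -/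

/-- `a` is a successor of `c`. -/
def IsSucc (a c : V) : Prop := P.strict a c ∧ ∀ b, P.strict a b → P.refines b c → b = c

/-- A successor-trail (as a list, each entry a successor of the previous one). -/
def SuccChain (l : List V) : Prop := l.Chain' fun x y => P.IsSucc y x

/-- A successor-trail from `m` to `a`. -/
def IsSuccTrailFromTo (m a : V) (l : List V) : Prop :=
  P.SuccChain l ∧ l.head? = some m ∧ l.getLast? = some a

/-- `(V,⊑)` is a tree. -/
def IsTree : Prop :=
  ∃ m, (∀ a, P.refines a m) ∧ ∀ a, ∃! l : List V, P.IsSuccTrailFromTo m a l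

/-- `(V,⊑)` is a trea. -/
def IsTrea : Prop :=
  ∃ m, (∀ a, P.refines a m) ∧ (∀ a, { b | P.refines a b }.Finite) ∧
    ∀ a, ∃ g : ℕ, ∀ l : List V, P.IsSuccTrailFromTo m a l → l.length = g

/-- Every infinite successor-trail is a point. -/
def SuccTrailsArePoints : Prop :=
  ∀ q : ℕ → V, (∀ n, P.IsSucc (q (n + 1)) (q n)) → P.IsPoint q

def IsSpread : Prop := P.IsTree ∧ P.SuccTrailsArePoints

def IsSpraid : Prop := P.IsTrea ∧ P.SuccTrailsArePoints

/-- Finitely branching: every dot has finitely many successors. -/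
def FinBranching : Prop := ∀ a : V, { b | P.IsSucc b a }.Finite

def IsFan : Prop := P.IsSpread ∧ P.FinBranching

def IsFann : Prop := P.IsSpraid ∧ P.FinBranching

end PreNaturalSpace
/-! ## The natural real numbers and the lean dyadic spraid σ_ℝ -/

/-- Basic dots for the natural reals: `none` is the maximal dot `(-∞,∞)`,
`some ⟨(p,q), _⟩` is the closed rational interval `[p,q]` with `p < q`. -/
def RDot : Type := Option { pq : ℚ × ℚ // pq.1 < pq.2 }

/-- Apartness of rational intervals: a positive gap. -/
def rApart : RDot → RDot → Prop
  | some a, some b => b.1.2 < a.1.1 ∨ a.1.2 < b.1.1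
  | _, _ => False

/-- Refinement of rational intervals: containment of closed intervals. -/
def rRefines : RDot → RDot → Prop
  | _, none => True
  | none, some _ => False
  | some a, some b => b.1.1 ≤ a.1.1 ∧ a.1.2 ≤ b.1.2

/-- The pre-natural space of the natural real numbers. -/
noncomputable def RPre : PreNaturalSpace RDot where
  countable' := by unfold RDot; infer_instance
  apart := rApart
  refines := rRefines
  apart_dec := Classical.decRel _
  refines_dec := Classical.decRel _
  apart_symm := by
    rintro (_ | a) (_ | b) h <;> simp [rApart] at h ⊢ <;> tauto
  apart_irrefl := by
    rintro (_ | a) h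
    · exact h
    · simp only [rApart] at h
      rcases h with h | h <;> exact absurd a.2 (not_lt.mpr h.le)
  apart_mono := by
    rintro (_ | a) (_ | b) (_ | c) hab hcb <;>
      simp [rApart, rRefines] at hab hcb ⊢
    rcases hcb with h | h
    · exact Or.inl (lt_of_le_of_lt hab.2 h)
    · exact Or.inr (lt_of_lt_of_le h hab.1)
  refines_refl := by rintro (_ | a) <;> simp [rRefines]
  refines_trans := by
    rintro (_ | a) (_ | b) (_ | c) h1 h2 <;> simp [rRefines] at h1 h2 ⊢
    exact ⟨le_trans h2.1 h1.1, le_trans h1.2 h2.2⟩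
  refines_antisymm := by
    rintro (_ | a) (_ | b) h1 h2 <;> simp [rRefines] at h1 h2 ⊢
    · rfl
    have : a.1 = b.1 := Prod.ext (le_antisymm h2.1 h1.1) (le_antisymm h1.2 h2.2)
    exact congrArg some (Subtype.ext this)

lemma dyadic_lt (n : ℤ) (m : ℕ) : (n : ℚ) / 2 ^ m < ((n : ℚ) + 2) / 2 ^ m := by
  have h2 : (0 : ℚ) < 2 ^ m := by positivity
  rw [div_lt_div_iff_of_pos_right h2]
  linarith

/-- The lean dyadic interval `[n/2^m, (n+2)/2^m]` as a dot of the natural reals. -/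
def leanIv (n : ℤ) (m : ℕ) : RDot :=
  some ⟨((n : ℚ) / 2 ^ m, ((n : ℚ) + 2) / 2 ^ m), dyadic_lt n m⟩

/-- The basic dots of `σ_ℝ` : the maximal dot together with the lean dyadic intervals. -/
def IsLeanDyadic : Set RDot := { d | d = none ∨ ∃ (n : ℤ) (m : ℕ), d = leanIv n m }

/-- The spraid `σ_ℝ` of lean dyadic intervals, with the apartness and refinement
of the natural reals. -/
noncomputable def SigPre : PreNaturalSpace IsLeanDyadic := RPre.restrict IsLeanDyadic

/-- The unique real number represented by a natural real: the supremum of the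
left endpoints of its intervals. -/
noncomputable def rhoR (x : RPre.Pt) : ℝ :=
  sSup { r : ℝ | ∃ (n : ℕ) (pq : { pq : ℚ × ℚ // pq.1 < pq.2 }),
    x.1 n = some pq ∧ r = (pq.1.1 : ℝ) }

/-- The unique real number represented by a point of `σ_ℝ`. -/
noncomputable def rhoSig (x : SigPre.Pt) : ℝ :=
  sSup { r : ℝ | ∃ (n : ℕ) (pq : { pq : ℚ × ℚ // pq.1 < pq.2 }),
    (x.1 n).1 = some pq ∧ r = (pq.1.1 : ℝ) }

/-! ## Proof of Statement 17 -/

namespace Stmt17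

set_option maxHeartbeats 1000000

open Set

noncomputable section
open scoped Classical

/-- `2⁻ˢ` as a real number. -/
def pw (s : ℕ) : ℝ := ((2:ℝ)^s)⁻¹

lemma two_pow_pos (s : ℕ) : (0:ℝ) < 2^s := by positivity

lemma q_two_pow_pos (s : ℕ) : (0:ℚ) < 2^s := by positivity

lemma pw_pos (s : ℕ) : 0 < pw s := inv_pos.2 (two_pow_pos s)

lemma pw_anti {s t : ℕ} (h : s ≤ t) : pw t ≤ pw s :=
  inv_anti₀ (two_pow_pos s) (pow_le_pow_right₀ one_le_two h)

lemma pw_succ (s : ℕ) : pw (s+1) = pw s / 2 := by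
  rw [pw, pw, pow_succ, mul_inv]; ring

lemma exists_pw_lt {ε : ℝ} (hε : 0 < ε) : ∃ t : ℕ, 2 * pw t < ε := by
  obtain ⟨t, ht⟩ := pow_unbounded_of_one_lt (2/ε) (one_lt_two (α := ℝ))
  refine ⟨t, ?_⟩
  have h2 : (0:ℝ) < 2^t := two_pow_pos t
  rw [div_lt_iff₀ hε] at ht
  rw [pw, ← div_eq_mul_inv, div_lt_iff₀ h2]
  nlinarith

lemma exists_qpow_lt {ε : ℚ} (hε : 0 < ε) : ∃ t : ℕ, (2:ℚ)/2^t < ε := by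
  obtain ⟨t, ht⟩ := pow_unbounded_of_one_lt (2/ε) (one_lt_two (α := ℚ))
  refine ⟨t, ?_⟩
  have h2 : (0:ℚ) < 2^t := q_two_pow_pos t
  rw [div_lt_iff₀ hε] at ht
  rw [div_lt_iff₀ h2]
  nlinarith

/-- Left endpoint of the lean dyadic interval `leanIv k t`. -/
def dlo (k : ℤ) (t : ℕ) : ℚ := (k:ℚ) / 2^t

/-- Right endpoint of the lean dyadic interval `leanIv k t`. -/
def dhi (k : ℤ) (t : ℕ) : ℚ := ((k:ℚ)+2) / 2^t

lemma dlo_lt_dhi (k : ℤ) (t : ℕ) : dlo k t < dhi k t := dyadic_lt k t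

lemma width_eq (k : ℤ) (t : ℕ) : dhi k t - dlo k t = 2/2^t := by
  rw [dhi, dlo]; ring

lemma leanIv_def (k : ℤ) (t : ℕ) :
    leanIv k t = some ⟨(dlo k t, dhi k t), dyadic_lt k t⟩ := rfl

lemma cast_dlo (k : ℤ) (t : ℕ) : ((dlo k t : ℚ):ℝ) = (k:ℝ)/2^t := by
  rw [dlo]; push_cast; ring

lemma cast_dhi (k : ℤ) (t : ℕ) : ((dhi k t : ℚ):ℝ) = ((k:ℝ)+2)/2^t := by
  rw [dhi]; push_cast; ring

lemma cast_two_div (t : ℕ) : (((2:ℚ)/2^t : ℚ) : ℝ) = 2 * pw t := by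
  push_cast; rw [pw, div_eq_mul_inv]

lemma qpow_div_anti {s t : ℕ} (h : t ≤ s) : (2:ℚ)/2^s ≤ 2/2^t :=
  div_le_div_of_nonneg_left (by norm_num) (q_two_pow_pos t)
    (pow_le_pow_right₀ one_le_two h)

lemma icc_ne (k : ℤ) (t : ℕ) : ((dlo k t : ℚ):ℝ) ≤ ((dhi k t : ℚ):ℝ) := by
  exact_mod_cast (dlo_lt_dhi k t).le

lemma leanIv_inj {a c : ℤ} {b d : ℕ} (h : leanIv a b = leanIv c d) :
    a = c ∧ b = d := by
  rw [leanIv, leanIv] at h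
  replace h := Option.some_injective _ h
  rw [Subtype.mk_eq_mk, Prod.mk.injEq] at h
  obtain ⟨h1, h2⟩ := h
  have hb := q_two_pow_pos b
  have hd := q_two_pow_pos d
  have hw : (2:ℚ)/2^b = 2/2^d := by
    calc (2:ℚ)/2^b = ((a:ℚ)+2)/2^b - (a:ℚ)/2^b := by ring
    _ = ((c:ℚ)+2)/2^d - (c:ℚ)/2^d := by rw [h1, h2]
    _ = 2/2^d := by ring
  have hbd' : b = d := by
    have hb' : (2:ℚ)^b ≠ 0 := hb.ne'
    have hd' : (2:ℚ)^d ≠ 0 := hd.ne'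
    rw [div_eq_div_iff hb' hd'] at hw
    have hpow : (2:ℚ)^b = 2^d := by linarith
    have h1' : b ≤ d := (pow_le_pow_iff_right₀ (a := (2:ℚ)) one_lt_two).1 hpow.le
    have h2' : d ≤ b := (pow_le_pow_iff_right₀ (a := (2:ℚ)) one_lt_two).1 hpow.ge
    omega
  subst hbd'
  refine ⟨?_, rfl⟩
  have : (a:ℚ) = (c:ℚ) := by
    field_simp at h1
    exact_mod_cast h1
  exact_mod_cast this

variable (f : ℝ → ℝ)

/-- Infimum of `f` over the interval of `leanIv k t`. -/
def fld (k : ℤ) (t : ℕ) : ℝ := sInf (f '' Icc ((dlo k t : ℚ):ℝ) ((dhi k t : ℚ):ℝ))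

/-- Supremum of `f` over the interval of `leanIv k t`. -/
def fhd (k : ℤ) (t : ℕ) : ℝ := sSup (f '' Icc ((dlo k t : ℚ):ℝ) ((dhi k t : ℚ):ℝ))

/-- The dot qualifies: small oscillation. -/
def qual (k : ℤ) (t : ℕ) : Prop := fhd f k t - fld f k t ≤ pw 1

/-- The output scale for a qualifying dot. -/
def s0 (k : ℤ) (t : ℕ) : ℕ :=
  Nat.findGreatest (fun s => fhd f k t - fld f k t ≤ pw (s+1)) t

/-- Anchor of the rough image interval. -/
def g0k (k : ℤ) (t : ℕ) : ℤ := ⌊(fld f k t - pw (s0 f k t + 2)) * 2^(s0 f k t)⌋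

def glo (k : ℤ) (t : ℕ) : ℚ := dlo (g0k f k t) (s0 f k t)

def ghi (k : ℤ) (t : ℕ) : ℚ := dhi (g0k f k t) (s0 f k t)

lemma cont_of (hf : ∀ a b : ℝ, UniformContinuousOn f (Set.Icc a b)) :
    Continuous f := by
  rw [continuous_iff_continuousAt]
  intro x
  have h := (hf (x-1) (x+1)).continuousOn
  exact h.continuousAt (Icc_mem_nhds (by linarith) (by linarith))

lemma mem_Ed (hc : Continuous f) {k : ℤ} {t : ℕ} {x : ℝ}
    (hx : x ∈ Icc ((dlo k t : ℚ):ℝ) ((dhi k t : ℚ):ℝ)) :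
    fld f k t ≤ f x ∧ f x ≤ fhd f k t := by
  have hK : IsCompact (f '' Icc ((dlo k t : ℚ):ℝ) ((dhi k t : ℚ):ℝ)) :=
    isCompact_Icc.image hc
  exact ⟨csInf_le hK.bddBelow ⟨x, hx, rfl⟩, le_csSup hK.bddAbove ⟨x, hx, rfl⟩⟩

lemma osc_nonneg (hc : Continuous f) (k : ℤ) (t : ℕ) :
    0 ≤ fhd f k t - fld f k t := by
  have h := mem_Ed f hc (k := k) (t := t) (x := ((dlo k t : ℚ):ℝ))
    ⟨le_refl _, icc_ne k t⟩
  linarith [h.1, h.2]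

lemma Ed_mono (hc : Continuous f) {k k' : ℤ} {t t' : ℕ}
    (h1 : dlo k t ≤ dlo k' t') (h2 : dhi k' t' ≤ dhi k t) :
    fld f k t ≤ fld f k' t' ∧ fhd f k' t' ≤ fhd f k t := by
  have hsub : Icc ((dlo k' t' : ℚ):ℝ) ((dhi k' t' : ℚ):ℝ) ⊆
      Icc ((dlo k t : ℚ):ℝ) ((dhi k t : ℚ):ℝ) :=
    Icc_subset_Icc (by exact_mod_cast h1) (by exact_mod_cast h2)
  have hK : IsCompact (f '' Icc ((dlo k t : ℚ):ℝ) ((dhi k t : ℚ):ℝ)) :=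
    isCompact_Icc.image hc
  have hne : (f '' Icc ((dlo k' t' : ℚ):ℝ) ((dhi k' t' : ℚ):ℝ)).Nonempty :=
    ⟨f _, mem_image_of_mem f ⟨le_refl _, icc_ne k' t'⟩⟩
  exact ⟨csInf_le_csInf hK.bddBelow hne (image_mono hsub),
    csSup_le_csSup hK.bddAbove hne (image_mono hsub)⟩

lemma osc_small (hf : ∀ a b : ℝ, UniformContinuousOn f (Set.Icc a b))
    (hc : Continuous f) (K : ℤ) (T : ℕ) {ε : ℝ} (hε : 0 < ε) :
    ∃ t0 : ℕ, ∀ k t, dlo K T ≤ dlo k t → dhi k t ≤ dhi K T → t0 ≤ t →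
      fhd f k t - fld f k t ≤ ε := by
  obtain ⟨δ, hδ, hd⟩ := Metric.uniformContinuousOn_iff.1
    (hf ((dlo K T : ℚ):ℝ) ((dhi K T : ℚ):ℝ)) ε hε
  obtain ⟨t0, ht0⟩ := exists_pw_lt hδ
  refine ⟨t0, fun k t h1 h2 ht => ?_⟩
  have hne : (Icc ((dlo k t : ℚ):ℝ) ((dhi k t : ℚ):ℝ)).Nonempty :=
    nonempty_Icc.2 (icc_ne k t)
  obtain ⟨xM, hxM, hM⟩ := isCompact_Icc.exists_isMaxOn hne hc.continuousOn
  obtain ⟨xm, hxm, hm⟩ := isCompact_Icc.exists_isMinOn hne hc.continuousOn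
  have hsub : Icc ((dlo k t : ℚ):ℝ) ((dhi k t : ℚ):ℝ) ⊆
      Icc ((dlo K T : ℚ):ℝ) ((dhi K T : ℚ):ℝ) :=
    Icc_subset_Icc (by exact_mod_cast h1) (by exact_mod_cast h2)
  have hup : fhd f k t ≤ f xM :=
    csSup_le (hne.image f) (by rintro y ⟨z, hz, rfl⟩; exact hM hz)
  have hlo : f xm ≤ fld f k t :=
    le_csInf (hne.image f) (by rintro y ⟨z, hz, rfl⟩; exact hm hz)
  have hwidth : ((dhi k t : ℚ):ℝ) - ((dlo k t : ℚ):ℝ) = 2 * pw t := by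
    rw [← cast_two_div]
    exact_mod_cast congrArg (fun q : ℚ => (q:ℝ)) (width_eq k t)
  have hdist : dist xM xm < δ := by
    rw [Real.dist_eq, abs_sub_lt_iff]
    obtain ⟨ha1, ha2⟩ := hxM
    obtain ⟨hb1, hb2⟩ := hxm
    have := pw_anti ht
    constructor <;> linarith
  have hfd := hd xM (hsub hxM) xm (hsub hxm) hdist
  rw [Real.dist_eq] at hfd
  have := le_of_lt (lt_of_abs_lt hfd)
  linarith

lemma s0_osc {k : ℤ} {t : ℕ} (hq : qual f k t) :
    fhd f k t - fld f k t ≤ pw (s0 f k t + 1) :=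
  Nat.findGreatest_spec (P := fun s => fhd f k t - fld f k t ≤ pw (s+1)) (Nat.zero_le t) hq

lemma s0_le (k : ℤ) (t : ℕ) : s0 f k t ≤ t := Nat.findGreatest_le t

lemma le_s0 {k : ℤ} {τ s : ℕ} (hs : s ≤ τ)
    (h : fhd f k τ - fld f k τ ≤ pw (s+1)) : s ≤ s0 f k τ :=
  Nat.le_findGreatest hs h

lemma g0_spec {k : ℤ} {t : ℕ} (hq : qual f k t) :
    ((glo f k t : ℚ):ℝ) ≤ fld f k t - pw (s0 f k t + 2) ∧
    fhd f k t + pw (s0 f k t + 2) ≤ ((ghi f k t : ℚ):ℝ) := by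
  set s := s0 f k t with hs
  have hosc := s0_osc f hq
  have h2 : (0:ℝ) < 2^s := two_pow_pos s
  have hfl : ((g0k f k t : ℤ):ℝ) ≤ (fld f k t - pw (s + 2)) * 2^s := Int.floor_le _
  have hfl2 : (fld f k t - pw (s + 2)) * 2^s - 1 < ((g0k f k t : ℤ):ℝ) :=
    Int.sub_one_lt_floor _
  have e1 : ((glo f k t : ℚ):ℝ) = ((g0k f k t : ℤ):ℝ)/2^s := cast_dlo _ _
  have e2 : ((ghi f k t : ℚ):ℝ) = (((g0k f k t : ℤ):ℝ)+2)/2^s := cast_dhi _ _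
  have hpw : pw s * 2^s = 1 := inv_mul_cancel₀ h2.ne'
  have hps1 : pw (s+1) = pw s / 2 := pw_succ s
  have hps2 : pw (s+2) = pw s / 4 := by rw [pw_succ (s+1), pw_succ s]; ring
  constructor
  · rw [e1, div_le_iff₀ h2]
    calc ((g0k f k t : ℤ):ℝ) ≤ (fld f k t - pw (s + 2)) * 2^s := hfl
    _ = (fld f k t - pw (s+2)) * 2^s := rfl
  · rw [e2, le_div_iff₀ h2]
    have key : (fhd f k t + pw (s+2)) * 2^s ≤ (fld f k t - pw (s+2)) * 2^s + 1 := by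
      have hstep : fhd f k t + pw (s+2) ≤ (fld f k t - pw (s+2)) + pw s := by
        rw [hps2] at *
        linarith [hosc, hps1, hps2]
      calc (fhd f k t + pw (s+2)) * 2^s
          ≤ ((fld f k t - pw (s+2)) + pw s) * 2^s :=
            mul_le_mul_of_nonneg_right hstep h2.le
      _ = (fld f k t - pw (s+2)) * 2^s + pw s * 2^s := by ring
      _ = (fld f k t - pw (s+2)) * 2^s + 1 := by rw [hpw]
    linarith

lemma scale_le {n κ : ℤ} {m τ : ℕ} (h1 : dlo κ τ ≤ dlo n m) (h2 : dhi n m ≤ dhi κ τ) :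
    τ ≤ m := by
  have hw : (2:ℚ)/2^m ≤ 2/2^τ := by
    have e1 := width_eq n m
    have e2 := width_eq κ τ
    linarith
  have hm := q_two_pow_pos m
  have hτ := q_two_pow_pos τ
  rw [div_le_div_iff₀ hm hτ] at hw
  have : (2:ℚ)^τ ≤ 2^m := by linarith
  exact (pow_le_pow_iff_right₀ (a := (2:ℚ)) one_lt_two).1 this

/-- The finite set of qualifying ancestors of the dot `leanIv n m`. -/
def anc (n : ℤ) (m : ℕ) : Finset (ℤ × ℕ) :=
  (Finset.Icc (-(n.natAbs:ℤ) - 4) ((n.natAbs:ℤ) + 4) ×ˢ Finset.range (m+1)).filter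
    (fun kt => dlo kt.1 kt.2 ≤ dlo n m ∧ dhi n m ≤ dhi kt.1 kt.2 ∧ qual f kt.1 kt.2)

lemma mem_anc {n κ : ℤ} {m τ : ℕ} :
    (κ, τ) ∈ anc f n m ↔ dlo κ τ ≤ dlo n m ∧ dhi n m ≤ dhi κ τ ∧ qual f κ τ := by
  rw [anc, Finset.mem_filter]
  constructor
  · exact fun h => h.2
  · intro h
    refine ⟨?_, h⟩
    rw [Finset.mem_product]
    obtain ⟨h1, h2, -⟩ := h
    have hτ : τ ≤ m := scale_le h1 h2
    have hm := q_two_pow_pos m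
    have ht := q_two_pow_pos τ
    have hab : (2:ℚ)^τ ≤ 2^m := pow_le_pow_right₀ one_le_two hτ
    have hx1 : (κ:ℚ) * 2^m ≤ (n:ℚ) * 2^τ := by
      rw [dlo, dlo, div_le_div_iff₀ ht hm] at h1; exact h1
    have hx2 : ((n:ℚ)+2) * 2^τ ≤ ((κ:ℚ)+2) * 2^m := by
      rw [dhi, dhi, div_le_div_iff₀ hm ht] at h2; exact h2
    have habs0 : ((n.natAbs:ℤ):ℚ) = |(n:ℚ)| := by
      rw [← Int.abs_eq_natAbs, Int.cast_abs]
    have habs1 : (n:ℚ) ≤ ((n.natAbs:ℤ):ℚ) := by rw [habs0]; exact le_abs_self _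
    have habs2 : -((n.natAbs:ℤ):ℚ) ≤ (n:ℚ) := by rw [habs0]; exact neg_abs_le _
    constructor
    · rw [Finset.mem_Icc]
      constructor
      · -- lower bound for κ
        have key : (-((n.natAbs:ℤ):ℚ) - 2) * 2^m ≤ ((n:ℚ)+2) * 2^τ := by
          rcases le_or_gt 0 ((n:ℚ)+2) with hpos | hneg
          · have hA : (0:ℚ) ≤ ((n:ℚ)+2) * 2^τ := mul_nonneg hpos ht.le
            have hB : (-((n.natAbs:ℤ):ℚ) - 2) * 2^m ≤ 0 := by
              apply mul_nonpos_of_nonpos_of_nonneg _ hm.le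
              have : (0:ℚ) ≤ ((n.natAbs:ℤ):ℚ) := by positivity
              linarith
            linarith
          · have h3 : ((n:ℚ)+2) * 2^m ≤ ((n:ℚ)+2) * 2^τ := by
              apply mul_le_mul_of_nonpos_left hab hneg.le
            have h4 : -((n.natAbs:ℤ):ℚ) - 2 ≤ (n:ℚ)+2 := by linarith
            nlinarith
        have : (-((n.natAbs:ℤ):ℚ) - 2) * 2^m ≤ ((κ:ℚ)+2) * 2^m := le_trans key hx2
        have hκ : -((n.natAbs:ℤ):ℚ) - 2 ≤ (κ:ℚ)+2 :=
          le_of_mul_le_mul_right this hm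
        have : (-(n.natAbs:ℤ) - 4 : ℚ) ≤ (κ:ℚ) := by push_cast at hκ ⊢; linarith
        exact_mod_cast this
      · -- upper bound for κ
        have key : (n:ℚ) * 2^τ ≤ ((n.natAbs:ℤ):ℚ) * 2^m := by
          rcases le_or_gt 0 (n:ℚ) with hpos | hneg
          · calc (n:ℚ)*2^τ ≤ (n:ℚ)*2^m := mul_le_mul_of_nonneg_left hab hpos
            _ ≤ ((n.natAbs:ℤ):ℚ)*2^m := mul_le_mul_of_nonneg_right habs1 hm.le
          · have hA : (n:ℚ)*2^τ ≤ 0 := mul_nonpos_of_nonpos_of_nonneg hneg.le ht.le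
            have hB : (0:ℚ) ≤ ((n.natAbs:ℤ):ℚ)*2^m := by positivity
            linarith
        have : (κ:ℚ) * 2^m ≤ ((n.natAbs:ℤ):ℚ) * 2^m := le_trans hx1 key
        have hκ : (κ:ℚ) ≤ ((n.natAbs:ℤ):ℚ) := le_of_mul_le_mul_right this hm
        have : (κ:ℚ) ≤ ((n.natAbs:ℤ):ℚ) + 4 := by linarith
        exact_mod_cast this
    · exact Finset.mem_range.2 (Nat.lt_succ_of_le hτ)

lemma anc_self {n : ℤ} {m : ℕ} (hq : qual f n m) : (n, m) ∈ anc f n m :=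
  (mem_anc f).2 ⟨le_refl _, le_refl _, hq⟩

lemma anc_mono {n κ : ℤ} {m τ : ℕ} (h1 : dlo κ τ ≤ dlo n m) (h2 : dhi n m ≤ dhi κ τ) :
    anc f κ τ ⊆ anc f n m := by
  intro kt hkt
  rcases kt with ⟨a, b⟩
  rw [mem_anc] at hkt ⊢
  exact ⟨hkt.1.trans h1, h2.trans hkt.2.1, hkt.2.2⟩

def Lq (n : ℤ) (m : ℕ) : ℚ :=
  if h : (anc f n m).Nonempty then
    ((anc f n m).image (fun kt => glo f kt.1 kt.2)).max' (h.image _) else 0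

def Rq (n : ℤ) (m : ℕ) : ℚ :=
  if h : (anc f n m).Nonempty then
    ((anc f n m).image (fun kt => ghi f kt.1 kt.2)).min' (h.image _) else 0

def Sm (n : ℤ) (m : ℕ) : ℕ :=
  if h : (anc f n m).Nonempty then
    ((anc f n m).image (fun kt => s0 f kt.1 kt.2)).max' (h.image _) else 0

lemma le_Lq {n : ℤ} {m : ℕ} (h : (anc f n m).Nonempty) {kt : ℤ × ℕ}
    (hm : kt ∈ anc f n m) : glo f kt.1 kt.2 ≤ Lq f n m := by
  rw [Lq, dif_pos h]
  apply Finset.le_max'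
  exact Finset.mem_image_of_mem _ hm

lemma Rq_le {n : ℤ} {m : ℕ} (h : (anc f n m).Nonempty) {kt : ℤ × ℕ}
    (hm : kt ∈ anc f n m) : Rq f n m ≤ ghi f kt.1 kt.2 := by
  rw [Rq, dif_pos h]
  exact Finset.min'_le _ _ (Finset.mem_image_of_mem _ hm)

lemma s0_le_Sm {n : ℤ} {m : ℕ} (h : (anc f n m).Nonempty) {kt : ℤ × ℕ}
    (hm : kt ∈ anc f n m) : s0 f kt.1 kt.2 ≤ Sm f n m := by
  rw [Sm, dif_pos h]
  apply Finset.le_max'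
  exact Finset.mem_image_of_mem _ hm

lemma Lq_mem {n : ℤ} {m : ℕ} (h : (anc f n m).Nonempty) :
    ∃ kt ∈ anc f n m, glo f kt.1 kt.2 = Lq f n m := by
  rw [Lq, dif_pos h]
  have := Finset.max'_mem ((anc f n m).image (fun kt => glo f kt.1 kt.2)) (h.image _)
  rw [Finset.mem_image] at this
  obtain ⟨kt, hkt, he⟩ := this
  exact ⟨kt, hkt, he⟩

lemma Rq_mem {n : ℤ} {m : ℕ} (h : (anc f n m).Nonempty) :
    ∃ kt ∈ anc f n m, ghi f kt.1 kt.2 = Rq f n m := by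
  rw [Rq, dif_pos h]
  have := Finset.min'_mem ((anc f n m).image (fun kt => ghi f kt.1 kt.2)) (h.image _)
  rw [Finset.mem_image] at this
  obtain ⟨kt, hkt, he⟩ := this
  exact ⟨kt, hkt, he⟩

lemma Sm_mem {n : ℤ} {m : ℕ} (h : (anc f n m).Nonempty) :
    ∃ kt ∈ anc f n m, s0 f kt.1 kt.2 = Sm f n m := by
  rw [Sm, dif_pos h]
  have := Finset.max'_mem ((anc f n m).image (fun kt => s0 f kt.1 kt.2)) (h.image _)
  rw [Finset.mem_image] at this
  obtain ⟨kt, hkt, he⟩ := this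
  exact ⟨kt, hkt, he⟩

lemma margins (hc : Continuous f) {n : ℤ} {m : ℕ} (h : (anc f n m).Nonempty) :
    ((Lq f n m : ℚ):ℝ) ≤ fld f n m - pw (m+2) ∧
    fhd f n m + pw (m+2) ≤ ((Rq f n m : ℚ):ℝ) := by
  constructor
  · obtain ⟨⟨κ, τ⟩, hm, he⟩ := Lq_mem f h
    rw [mem_anc] at hm
    obtain ⟨h1, h2, hq⟩ := hm
    have hτ : τ ≤ m := scale_le h1 h2
    have hg := (g0_spec f hq).1
    have hmono := (Ed_mono f hc h1 h2).1
    have hpw : pw (m+2) ≤ pw (s0 f κ τ + 2) :=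
      pw_anti (by have := s0_le f κ τ; omega)
    rw [← he]
    calc ((glo f κ τ : ℚ):ℝ) ≤ fld f κ τ - pw (s0 f κ τ + 2) := hg
    _ ≤ fld f n m - pw (m+2) := by linarith
  · obtain ⟨⟨κ, τ⟩, hm, he⟩ := Rq_mem f h
    rw [mem_anc] at hm
    obtain ⟨h1, h2, hq⟩ := hm
    have hτ : τ ≤ m := scale_le h1 h2
    have hg := (g0_spec f hq).2
    have hmono := (Ed_mono f hc h1 h2).2
    have hpw : pw (m+2) ≤ pw (s0 f κ τ + 2) :=
      pw_anti (by have := s0_le f κ τ; omega)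
    rw [← he]
    calc fhd f n m + pw (m+2) ≤ fhd f κ τ + pw (s0 f κ τ + 2) := by linarith
    _ ≤ ((ghi f κ τ : ℚ):ℝ) := hg

lemma Lq_lt_Rq (hc : Continuous f) {n : ℤ} {m : ℕ} (h : (anc f n m).Nonempty) :
    Lq f n m < Rq f n m := by
  have hm := margins f hc h
  have h0 := osc_nonneg f hc n m
  have h1 := pw_pos (m+2)
  have : ((Lq f n m : ℚ):ℝ) < ((Rq f n m : ℚ):ℝ) := by linarith [hm.1, hm.2]
  exact_mod_cast this

lemma dlo_mul_pow {k : ℤ} {s S : ℕ} (h : s ≤ S) :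
    dlo k s * 2^S = ((k * 2^(S-s) : ℤ) : ℚ) := by
  rw [dlo]
  have e : (2:ℚ)^S = 2^s * 2^(S-s) := by rw [← pow_add, Nat.add_sub_cancel' h]
  rw [e]
  have h0 := (q_two_pow_pos s).ne'
  push_cast
  field_simp

lemma dhi_mul_pow {k : ℤ} {s S : ℕ} (h : s ≤ S) :
    dhi k s * 2^S = (((k+2) * 2^(S-s) : ℤ) : ℚ) := by
  rw [dhi]
  have e : (2:ℚ)^S = 2^s * 2^(S-s) := by rw [← pow_add, Nat.add_sub_cancel' h]
  rw [e]
  have h0 := (q_two_pow_pos s).ne'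
  push_cast
  field_simp

/-- The image dot: the intersection of the rough image intervals of all
qualifying ancestors, as a lean dyadic pair. -/
def gdot (n : ℤ) (m : ℕ) : ℤ × ℕ :=
  if Rq f n m - Lq f n m = 2/2^(Sm f n m) then
    (⌊Lq f n m * 2^(Sm f n m)⌋, Sm f n m)
  else
    (2*⌊Lq f n m * 2^(Sm f n m)⌋, Sm f n m + 1)

lemma gdot_spec (hc : Continuous f) {n : ℤ} {m : ℕ} (h : (anc f n m).Nonempty) :
    dlo (gdot f n m).1 (gdot f n m).2 = Lq f n m ∧
    dhi (gdot f n m).1 (gdot f n m).2 = Rq f n m := by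
  obtain ⟨kt1, hm1, he1⟩ := Lq_mem f h
  obtain ⟨kt2, hm2, he2⟩ := Rq_mem f h
  obtain ⟨kt3, hm3, he3⟩ := Sm_mem f h
  set S := Sm f n m with hS
  have hs1 : s0 f kt1.1 kt1.2 ≤ S := s0_le_Sm f h hm1
  have hs2 : s0 f kt2.1 kt2.2 ≤ S := s0_le_Sm f h hm2
  set A : ℤ := g0k f kt1.1 kt1.2 * 2^(S - s0 f kt1.1 kt1.2) with hA
  set B : ℤ := (g0k f kt2.1 kt2.2 + 2) * 2^(S - s0 f kt2.1 kt2.2) with hB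
  have h2S := q_two_pow_pos S
  have hLA : Lq f n m * 2^S = (A:ℚ) := by
    rw [← he1, hA]
    exact dlo_mul_pow hs1
  have hRB : Rq f n m * 2^S = (B:ℚ) := by
    rw [← he2, hB]
    exact dhi_mul_pow hs2
  have hLq : Lq f n m = (A:ℚ)/2^S := by
    rw [eq_div_iff h2S.ne']; exact hLA
  have hRq : Rq f n m = (B:ℚ)/2^S := by
    rw [eq_div_iff h2S.ne']; exact hRB
  have hABlt : A < B := by
    have hlt := Lq_lt_Rq f hc h
    rw [hLq, hRq, div_lt_div_iff₀ h2S h2S] at hlt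
    have : (A:ℚ) < B := by nlinarith
    exact_mod_cast this
  have hK3lo : dlo (g0k f kt3.1 kt3.2) S ≤ Lq f n m := by
    have := le_Lq f h hm3
    rw [glo, he3] at this
    exact this
  have hK3hi : Rq f n m ≤ dhi (g0k f kt3.1 kt3.2) S := by
    have := Rq_le f h hm3
    rw [ghi, he3] at this
    exact this
  have hBA : B ≤ A + 2 := by
    have u1 : (g0k f kt3.1 kt3.2 : ℚ) ≤ (A:ℚ) := by
      rw [dlo, hLq, div_le_div_iff₀ h2S h2S] at hK3lo
      nlinarith
    have u2 : (B:ℚ) ≤ (g0k f kt3.1 kt3.2 : ℚ) + 2 := by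
      rw [dhi, hRq, div_le_div_iff₀ h2S h2S] at hK3hi
      nlinarith
    have : (B:ℚ) ≤ (A:ℚ) + 2 := by linarith
    exact_mod_cast this
  have hfloor : ⌊Lq f n m * 2^S⌋ = A := by rw [hLA]; exact Int.floor_intCast A
  have hcond : (Rq f n m - Lq f n m = 2/2^S) ↔ B = A + 2 := by
    rw [hLq, hRq, div_sub_div_same]
    constructor
    · intro hh
      have : ((B:ℚ) - A) = 2 := by
        field_simp at hh
        linarith
      have : (B:ℚ) = (A:ℚ) + 2 := by linarith
      exact_mod_cast this
    · intro hh
      have : (B:ℚ) = (A:ℚ) + 2 := by exact_mod_cast hh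
      rw [this]
      ring
  rw [gdot]
  split_ifs with hcnd
  · have hB2 : B = A + 2 := hcond.1 hcnd
    rw [← hS, hfloor]
    constructor
    · rw [dlo, hLq]
    · rw [dhi, hRq, hB2]; push_cast; ring
  · have hB1 : B = A + 1 := by
      have : B ≠ A + 2 := fun hh => hcnd (hcond.2 hh)
      omega
    rw [← hS, hfloor]
    have h2S1 : (2:ℚ)^(S+1) = 2^S * 2 := pow_succ 2 S
    constructor
    · rw [dlo, hLq, h2S1]
      push_cast
      field_simp
    · rw [dhi, hRq, hB1, h2S1]
      push_cast
      field_simp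

lemma out_width {n : ℤ} {m : ℕ} (h : (anc f n m).Nonempty) (hq : qual f n m) :
    Rq f n m - Lq f n m ≤ 2/2^(s0 f n m) := by
  have hself := anc_self f hq
  have h1 := le_Lq f h hself
  have h2 := Rq_le f h hself
  have h3 := width_eq (g0k f n m) (s0 f n m)
  rw [glo] at h1
  rw [ghi] at h2
  linarith

lemma Lq_mono {n n' : ℤ} {m m' : ℕ} (h : (anc f n m).Nonempty)
    (hsub : anc f n m ⊆ anc f n' m') :
    Lq f n m ≤ Lq f n' m' ∧ Rq f n' m' ≤ Rq f n m := by
  have h' : (anc f n' m').Nonempty := h.mono hsub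
  constructor
  · obtain ⟨kt, hm, he⟩ := Lq_mem f h
    rw [← he]
    exact le_Lq f h' (hsub hm)
  · obtain ⟨kt, hm, he⟩ := Rq_mem f h
    rw [← he]
    exact Rq_le f h' (hsub hm)

def noneD : ↥IsLeanDyadic := ⟨none, Or.inl rfl⟩

def someD (k : ℤ) (t : ℕ) : ↥IsLeanDyadic := ⟨leanIv k t, Or.inr ⟨k, t, rfl⟩⟩

/-- The dot map of the refinement morphism. -/
def gmap (d : RDot) : ↥IsLeanDyadic :=
  if h : ∃ kt : ℤ × ℕ, d = leanIv kt.1 kt.2 ∧ (anc f kt.1 kt.2).Nonempty then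
    someD (gdot f (Classical.choose h).1 (Classical.choose h).2).1
      (gdot f (Classical.choose h).1 (Classical.choose h).2).2
  else noneD

lemma gmap_none : gmap f none = noneD := by
  unfold gmap
  rw [dif_neg]
  rintro ⟨kt, he, -⟩
  exact Option.some_ne_none _ he.symm

lemma gmap_neg {n : ℤ} {m : ℕ} (hne : ¬ (anc f n m).Nonempty) :
    gmap f (leanIv n m) = noneD := by
  rw [gmap, dif_neg]
  rintro ⟨kt, he, hN⟩
  obtain ⟨h1, h2⟩ := leanIv_inj he
  rw [← h1, ← h2] at hN
  exact hne hN

lemma gmap_pos {n : ℤ} {m : ℕ} (h : (anc f n m).Nonempty) :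
    gmap f (leanIv n m) = someD (gdot f n m).1 (gdot f n m).2 := by
  have hex : ∃ kt : ℤ × ℕ, leanIv n m = leanIv kt.1 kt.2 ∧ (anc f kt.1 kt.2).Nonempty :=
    ⟨(n, m), rfl, h⟩
  rw [gmap, dif_pos hex]
  obtain ⟨h1, h2⟩ := leanIv_inj (Classical.choose_spec hex).1
  rw [← h1, ← h2]

lemma rRefines_none (d : RDot) : rRefines d none := by
  cases d <;> trivial

lemma not_none_of_rRefines {d : RDot} {x : {pq : ℚ × ℚ // pq.1 < pq.2}}
    (h : rRefines d (some x)) : ∃ y, d = some y := by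
  cases d with
  | none => exact absurd h (by simp [rRefines])
  | some y => exact ⟨y, rfl⟩

lemma rRefines_some_iff {x y : {pq : ℚ × ℚ // pq.1 < pq.2}} :
    rRefines (some x) (some y) ↔ (y.1.1 ≤ x.1.1 ∧ x.1.2 ≤ y.1.2) := Iff.rfl

lemma rRefines_leanIv_iff {a c : ℤ} {b d : ℕ} :
    rRefines (leanIv a b) (leanIv c d) ↔ (dlo c d ≤ dlo a b ∧ dhi a b ≤ dhi c d) :=
  Iff.rfl

lemma sig_refines {a b : ↥IsLeanDyadic} : SigPre.refines a b ↔ rRefines a.1 b.1 :=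
  Iff.rfl

lemma sig_apart {a b : ↥IsLeanDyadic} : SigPre.apart a b ↔ rApart a.1 b.1 :=
  Iff.rfl

lemma dot_form (d : ↥IsLeanDyadic) {y : {pq : ℚ × ℚ // pq.1 < pq.2}}
    (h : d.1 = some y) : ∃ k s, d.1 = leanIv k s :=
  d.2.resolve_left (by rw [h]; simp)

lemma exists_some (p : SigPre.Pt) : ∃ N, ∀ n, N ≤ n → ∃ y, (p.1 n).1 = some y := by
  obtain ⟨j, hj1, hj2⟩ := p.2.shrink 0
  rcases hd : (p.1 0).1 with _ | y
  · have hjne : ∃ y, (p.1 j).1 = some y := by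
      rcases hdj : (p.1 j).1 with _ | y
      · exact absurd (Subtype.ext (hdj.trans hd.symm)) hj2
      · exact ⟨y, rfl⟩
    obtain ⟨y0, hy0⟩ := hjne
    refine ⟨j, fun n hn => ?_⟩
    have href : SigPre.refines (p.1 n) (p.1 j) := SigPre.refines_of_le p.2.mono hn
    have h2 : rRefines (p.1 n).1 (some y0) := by rw [← hy0]; exact href
    exact not_none_of_rRefines h2
  · refine ⟨0, fun n hn => ?_⟩
    have href : SigPre.refines (p.1 n) (p.1 0) := SigPre.refines_of_le p.2.mono hn
    have h2 : rRefines (p.1 n).1 (some y) := by rw [← hd]; exact href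
    exact not_none_of_rRefines h2

lemma scale_tendsto (p : SigPre.Pt) (t : ℕ) :
    ∃ N, ∀ n, N ≤ n → ∃ k s, (p.1 n).1 = leanIv k s ∧ t ≤ s := by
  induction t with
  | zero =>
    obtain ⟨N, hN⟩ := exists_some p
    refine ⟨N, fun n hn => ?_⟩
    obtain ⟨y, hy⟩ := hN n hn
    obtain ⟨k, s, hks⟩ := dot_form _ hy
    exact ⟨k, s, hks, Nat.zero_le s⟩
  | succ t ih =>
    obtain ⟨N, hN⟩ := ih
    obtain ⟨j, hj1, hj2⟩ := p.2.shrink N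
    obtain ⟨k', s', hk', hs'⟩ := hN N le_rfl
    have hjr : rRefines (p.1 j).1 (leanIv k' s') := by rw [← hk']; exact hj1
    obtain ⟨y, hy⟩ := not_none_of_rRefines hjr
    obtain ⟨kj, sj, hkj⟩ := dot_form _ hy
    rw [hkj] at hjr
    rw [rRefines_leanIv_iff] at hjr
    have hsle : s' ≤ sj := scale_le hjr.1 hjr.2
    have hslt : s' < sj := by
      rcases lt_or_eq_of_le hsle with hlt | heq
      · exact hlt
      · exfalso
        have h2s := q_two_pow_pos s'
        have h1 := hjr.1
        have h2 := hjr.2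
        rw [← heq] at hkj h1 h2
        rw [dlo, dlo, div_le_div_iff₀ h2s h2s] at h1
        rw [dhi, dhi, div_le_div_iff₀ h2s h2s] at h2
        have e1 : (k':ℚ) ≤ kj := by nlinarith
        have e2 : (kj:ℚ) ≤ k' := by nlinarith
        have : kj = k' := by
          have : (kj:ℚ) = k' := le_antisymm e2 e1
          exact_mod_cast this
        rw [this] at hkj
        exact hj2 (Subtype.ext (hkj.trans hk'.symm))
    refine ⟨j, fun n hn => ?_⟩
    have href2 : rRefines (p.1 n).1 (leanIv kj sj) := by
      rw [← hkj]; exact SigPre.refines_of_le p.2.mono hn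
    obtain ⟨y2, hy2⟩ := not_none_of_rRefines href2
    obtain ⟨kn, sn, hkn⟩ := dot_form _ hy2
    rw [hkn] at href2
    rw [rRefines_leanIv_iff] at href2
    have := scale_le href2.1 href2.2
    exact ⟨kn, sn, hkn, by omega⟩

lemma rho_mem (p : SigPre.Pt) {n : ℕ} {pq : {pq : ℚ × ℚ // pq.1 < pq.2}}
    (h : (p.1 n).1 = some pq) :
    (pq.1.1 : ℝ) ≤ rhoSig p ∧ rhoSig p ≤ (pq.1.2 : ℝ) := by
  have key : ∀ (n' : ℕ) (pq' : {pq : ℚ × ℚ // pq.1 < pq.2}),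
      (p.1 n').1 = some pq' → (pq'.1.1 : ℚ) ≤ pq.1.2 := by
    intro n' pq' h'
    rcases le_total n n' with hle | hle
    · have hr := SigPre.refines_of_le p.2.mono hle
      have h2 : rRefines (some pq') (some pq) := by rw [← h', ← h]; exact hr
      rw [rRefines_some_iff] at h2
      exact le_trans pq'.2.le h2.2
    · have hr := SigPre.refines_of_le p.2.mono hle
      have h2 : rRefines (some pq) (some pq') := by rw [← h, ← h']; exact hr
      rw [rRefines_some_iff] at h2
      exact le_trans h2.1 pq.2.le
  have hbdd : BddAbove {r : ℝ | ∃ (n : ℕ) (pq' : {pq : ℚ × ℚ // pq.1 < pq.2}),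
      (p.1 n).1 = some pq' ∧ r = (pq'.1.1 : ℝ)} := by
    refine ⟨(pq.1.2 : ℝ), ?_⟩
    rintro r ⟨n', pq', h', rfl⟩
    exact_mod_cast key n' pq' h'
  have hne : {r : ℝ | ∃ (n : ℕ) (pq' : {pq : ℚ × ℚ // pq.1 < pq.2}),
      (p.1 n).1 = some pq' ∧ r = (pq'.1.1 : ℝ)}.Nonempty := ⟨pq.1.1, n, pq, h, rfl⟩
  constructor
  · exact le_csSup hbdd ⟨n, pq, h, rfl⟩
  · exact csSup_le hne (by rintro r ⟨n', pq', h', rfl⟩; exact_mod_cast key n' pq' h')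

lemma rho_eq (p : SigPre.Pt) (y : ℝ)
    (hy : ∀ (n : ℕ) (pq : {pq : ℚ × ℚ // pq.1 < pq.2}),
      (p.1 n).1 = some pq → (pq.1.1:ℝ) ≤ y ∧ y ≤ (pq.1.2:ℝ)) :
    rhoSig p = y := by
  by_contra hne
  have hpos : 0 < |rhoSig p - y| := abs_pos.2 (sub_ne_zero.2 hne)
  obtain ⟨t, ht⟩ := exists_pw_lt hpos
  obtain ⟨N, hN⟩ := scale_tendsto p t
  obtain ⟨k, s, hks, hts⟩ := hN N le_rfl
  have h1 := rho_mem p (pq := ⟨(dlo k s, dhi k s), dyadic_lt k s⟩) hks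
  have h2 := hy N ⟨(dlo k s, dhi k s), dyadic_lt k s⟩ hks
  have hw : ((dhi k s:ℚ):ℝ) - ((dlo k s:ℚ):ℝ) = 2 * pw s := by
    rw [← cast_two_div]
    exact_mod_cast congrArg (fun q : ℚ => (q:ℝ)) (width_eq k s)
  have hpw := pw_anti hts
  have habs : |rhoSig p - y| ≤ 2 * pw s := by
    rw [abs_sub_le_iff]
    constructor
    · linarith [h1.1, h1.2, h2.1, h2.2]
    · linarith [h1.1, h1.2, h2.1, h2.2]
  linarith

lemma osc_tendsto (hf : ∀ a b : ℝ, UniformContinuousOn f (Set.Icc a b))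
    (hc : Continuous f) (p : SigPre.Pt) (t : ℕ) :
    ∃ N, ∀ n, N ≤ n → ∀ k s, (p.1 n).1 = leanIv k s →
      fhd f k s - fld f k s ≤ pw t := by
  obtain ⟨N0, hN0⟩ := exists_some p
  obtain ⟨y0, hy0⟩ := hN0 N0 le_rfl
  obtain ⟨K, T, hKT⟩ := dot_form _ hy0
  obtain ⟨t0, ht0⟩ := osc_small f hf hc K T (pw_pos t)
  obtain ⟨N1, hN1⟩ := scale_tendsto p t0
  refine ⟨max N0 N1, fun n hn k s hks => ?_⟩
  obtain ⟨k', s', hk', hs'⟩ := hN1 n (le_trans (le_max_right _ _) hn)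
  obtain ⟨hkk, hss⟩ := leanIv_inj (hk'.symm.trans hks)
  have href : rRefines (leanIv k s) (leanIv K T) := by
    rw [← hks, ← hKT]
    exact SigPre.refines_of_le p.2.mono (le_trans (le_max_left _ _) hn)
  rw [rRefines_leanIv_iff] at href
  exact ht0 k s href.1 href.2 (by omega)

lemma key_tendsto (hf : ∀ a b : ℝ, UniformContinuousOn f (Set.Icc a b))
    (hc : Continuous f) (p : SigPre.Pt) (t : ℕ) :
    ∃ N, ∀ n, N ≤ n → ∃ k s, (p.1 n).1 = leanIv k s ∧ qual f k s ∧
      (anc f k s).Nonempty ∧ t ≤ s0 f k s := by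
  obtain ⟨N1, hN1⟩ := osc_tendsto f hf hc p (t+1)
  obtain ⟨N2, hN2⟩ := scale_tendsto p t
  refine ⟨max N1 N2, fun n hn => ?_⟩
  obtain ⟨k, s, hks, hts⟩ := hN2 n (le_trans (le_max_right _ _) hn)
  have hosc := hN1 n (le_trans (le_max_left _ _) hn) k s hks
  have hq : qual f k s := le_trans hosc (pw_anti (by omega))
  exact ⟨k, s, hks, hq, ⟨(k, s), anc_self f hq⟩, le_s0 f hts hosc⟩

lemma y_mem (hc : Continuous f) (p : SigPre.Pt) {n : ℕ} {k : ℤ} {s : ℕ}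
    (hks : (p.1 n).1 = leanIv k s) (h : (anc f k s).Nonempty) :
    ((Lq f k s : ℚ):ℝ) ≤ f (rhoSig p) ∧ f (rhoSig p) ≤ ((Rq f k s : ℚ):ℝ) := by
  have hχ := rho_mem p (pq := ⟨(dlo k s, dhi k s), dyadic_lt k s⟩) hks
  have hE := mem_Ed f hc (k := k) (t := s) ⟨hχ.1, hχ.2⟩
  have hM := margins f hc h
  have hpw := pw_pos (s + 2)
  exact ⟨by linarith [hM.1, hE.1], by linarith [hM.2, hE.2]⟩

lemma image_cases (p : SigPre.Pt) (n : ℕ) :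
    gmap f (p.1 n).1 = noneD ∨
    (∃ k s, (p.1 n).1 = leanIv k s ∧ (anc f k s).Nonempty ∧
      gmap f (p.1 n).1 = someD (gdot f k s).1 (gdot f k s).2) := by
  rcases (p.1 n).2 with hnone | ⟨k, s, hks⟩
  · left; rw [hnone, gmap_none]
  · by_cases h : (anc f k s).Nonempty
    · right; exact ⟨k, s, hks, h, by rw [hks, gmap_pos f h]⟩
    · left; rw [hks, gmap_neg f h]

lemma mono_image (hc : Continuous f) (p : SigPre.Pt) (n : ℕ) :
    SigPre.refines (gmap f (p.1 (n+1)).1) (gmap f (p.1 n).1) := by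
  rcases image_cases f p n with h | ⟨k, s, hks, hNE, hq⟩
  · rw [h]
    show rRefines (gmap f (p.1 (n+1)).1).1 none
    exact rRefines_none _
  · rw [hq]
    have hr : rRefines (p.1 (n+1)).1 (leanIv k s) := by
      rw [← hks]; exact p.2.mono n
    obtain ⟨y, hy⟩ := not_none_of_rRefines hr
    obtain ⟨k', s', hk'⟩ := dot_form _ hy
    rw [hk'] at hr
    rw [rRefines_leanIv_iff] at hr
    have hsub := anc_mono f hr.1 hr.2
    have hNE' : (anc f k' s').Nonempty := hNE.mono hsub
    rw [hk', gmap_pos f hNE']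
    show rRefines (leanIv (gdot f k' s').1 (gdot f k' s').2)
      (leanIv (gdot f k s).1 (gdot f k s).2)
    rw [rRefines_leanIv_iff]
    have e1 := gdot_spec f hc hNE
    have e2 := gdot_spec f hc hNE'
    have hmono := Lq_mono f hNE hsub
    rw [e1.1, e1.2, e2.1, e2.2]
    exact hmono

lemma escape_hi (hf : ∀ a b : ℝ, UniformContinuousOn f (Set.Icc a b))
    (hc : Continuous f) (P : SigPre.Pt) {u : ℚ} (hu : f (rhoSig P) < (u:ℝ)) :
    ∃ j pq', (gmap f (P.1 j).1).1 = some pq' ∧ pq'.1.2 < u := by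
  obtain ⟨t, ht⟩ := exists_pw_lt (sub_pos.2 hu)
  obtain ⟨N, hN⟩ := key_tendsto f hf hc P t
  obtain ⟨k, s, hks, hq, hNE, hs0⟩ := hN N le_rfl
  have hy := y_mem f hc P hks hNE
  have hwid : Rq f k s - Lq f k s ≤ 2/2^t :=
    le_trans (out_width f hNE hq) (qpow_div_anti hs0)
  have hwr : ((Rq f k s:ℚ):ℝ) - ((Lq f k s:ℚ):ℝ) ≤ 2 * pw t := by
    rw [← cast_two_div]
    exact_mod_cast hwid
  have hRu : ((Rq f k s:ℚ):ℝ) < (u:ℝ) := by linarith [hy.1, hy.2]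
  have hgs := gdot_spec f hc hNE
  refine ⟨N, ⟨(dlo (gdot f k s).1 (gdot f k s).2, dhi (gdot f k s).1 (gdot f k s).2),
    dyadic_lt _ _⟩, ?_, ?_⟩
  · rw [hks, gmap_pos f hNE]; rfl
  · show dhi (gdot f k s).1 (gdot f k s).2 < u
    rw [hgs.2]
    exact_mod_cast hRu

lemma escape_lo (hf : ∀ a b : ℝ, UniformContinuousOn f (Set.Icc a b))
    (hc : Continuous f) (P : SigPre.Pt) {u : ℚ} (hu : (u:ℝ) < f (rhoSig P)) :
    ∃ j pq', (gmap f (P.1 j).1).1 = some pq' ∧ u < pq'.1.1 := by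
  obtain ⟨t, ht⟩ := exists_pw_lt (sub_pos.2 hu)
  obtain ⟨N, hN⟩ := key_tendsto f hf hc P t
  obtain ⟨k, s, hks, hq, hNE, hs0⟩ := hN N le_rfl
  have hy := y_mem f hc P hks hNE
  have hwid : Rq f k s - Lq f k s ≤ 2/2^t :=
    le_trans (out_width f hNE hq) (qpow_div_anti hs0)
  have hwr : ((Rq f k s:ℚ):ℝ) - ((Lq f k s:ℚ):ℝ) ≤ 2 * pw t := by
    rw [← cast_two_div]
    exact_mod_cast hwid
  have hLu : (u:ℝ) < ((Lq f k s:ℚ):ℝ) := by linarith [hy.1, hy.2]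
  have hgs := gdot_spec f hc hNE
  refine ⟨N, ⟨(dlo (gdot f k s).1 (gdot f k s).2, dhi (gdot f k s).1 (gdot f k s).2),
    dyadic_lt _ _⟩, ?_, ?_⟩
  · rw [hks, gmap_pos f hNE]; rfl
  · show u < dlo (gdot f k s).1 (gdot f k s).2
    rw [hgs.1]
    exact_mod_cast hLu

lemma image_isPoint (hf : ∀ a b : ℝ, UniformContinuousOn f (Set.Icc a b))
    (hc : Continuous f) (p : ℕ → ↥IsLeanDyadic) (hp : SigPre.IsPoint p) :
    SigPre.IsPoint (fun n => gmap f (p n).1) := by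
  set P : SigPre.Pt := ⟨p, hp⟩ with hP
  have hPp : ∀ n, P.1 n = p n := fun n => rfl
  constructor
  · -- mono
    exact fun n => mono_image f hc P n
  · -- shrink
    intro n
    rcases image_cases f P n with h | ⟨k, s, hks, hNE, hq⟩
    · obtain ⟨N, hN⟩ := key_tendsto f hf hc P 0
      obtain ⟨k, s, hks, hqual, hNE, -⟩ := hN N le_rfl
      refine ⟨N, ?_, ?_⟩
      · show SigPre.refines (gmap f (p N).1) (gmap f (p n).1)
        rw [show gmap f (p n).1 = noneD from h]
        show rRefines (gmap f (p N).1).1 none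
        exact rRefines_none _
      · show gmap f (p N).1 ≠ gmap f (p n).1
        rw [show gmap f (p n).1 = noneD from h]
        rw [show (p N) = P.1 N from rfl, hks, gmap_pos f hNE]
        intro heq
        have := congrArg Subtype.val heq
        simp [someD, noneD, leanIv] at this
    · have e1 := gdot_spec f hc hNE
      have hWpos : 0 < Rq f k s - Lq f k s := sub_pos.2 (Lq_lt_Rq f hc hNE)
      obtain ⟨t, ht⟩ := exists_qpow_lt hWpos
      obtain ⟨N, hN⟩ := key_tendsto f hf hc P t
      obtain ⟨k', s', hk', hq', hNE', hs0⟩ := hN (max n N) (le_max_right n N)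
      refine ⟨max n N, ?_, ?_⟩
      · exact SigPre.refines_of_le (p := fun i => gmap f (p i).1)
          (fun i => mono_image f hc P i) (le_max_left n N)
      · show gmap f (p (max n N)).1 ≠ gmap f (p n).1
        rw [show gmap f (p n).1 = someD (gdot f k s).1 (gdot f k s).2 from hq]
        rw [show (p (max n N)) = P.1 (max n N) from rfl, hk', gmap_pos f hNE']
        intro heq
        have h2 := leanIv_inj (congrArg Subtype.val heq)
        have e2 := gdot_spec f hc hNE'
        have hwid : Rq f k' s' - Lq f k' s' ≤ 2/2^t :=
          le_trans (out_width f hNE' hq') (qpow_div_anti hs0)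
        have eL : Lq f k' s' = Lq f k s := by
          rw [← e1.1, ← e2.1, h2.1, h2.2]
        have eR : Rq f k' s' = Rq f k s := by
          rw [← e1.2, ← e2.2, h2.1, h2.2]
        rw [eL, eR] at hwid
        linarith
  · -- decides
    intro a b hab
    have hab' : rApart a.1 b.1 := hab
    rcases ha : a.1 with _ | pqa
    · rw [ha] at hab'
      exact absurd hab' (by cases b.1 <;> simp [rApart])
    rcases hb : b.1 with _ | pqb
    · rw [ha, hb] at hab'
      exact absurd hab' (by simp [rApart])
    rw [ha, hb] at hab'
    rcases hab' with hgap | hgap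
    · -- pqb.1.2 < pqa.1.1
      set c : ℚ := (pqb.1.2 + pqa.1.1)/2 with hc'
      have hc1 : pqb.1.2 < c := by rw [hc']; linarith
      have hc2 : c < pqa.1.1 := by rw [hc']; linarith
      rcases le_total (f (rhoSig P)) ((c:ℚ):ℝ) with hyc | hyc
      · obtain ⟨j, pq', hj, hlt⟩ := escape_hi f hf hc P (u := pqa.1.1)
          (lt_of_le_of_lt hyc (by exact_mod_cast hc2))
        refine ⟨j, Or.inl ?_⟩
        show rApart (gmap f (p j).1).1 a.1
        rw [show (p j) = P.1 j from rfl, hj, ha]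
        exact Or.inr hlt
      · obtain ⟨j, pq', hj, hlt⟩ := escape_lo f hf hc P (u := pqb.1.2)
          (lt_of_lt_of_le (by exact_mod_cast hc1) hyc)
        refine ⟨j, Or.inr ?_⟩
        show rApart (gmap f (p j).1).1 b.1
        rw [show (p j) = P.1 j from rfl, hj, hb]
        exact Or.inl hlt
    · -- pqa.1.2 < pqb.1.1
      set c : ℚ := (pqa.1.2 + pqb.1.1)/2 with hc'
      have hc1 : pqa.1.2 < c := by rw [hc']; linarith
      have hc2 : c < pqb.1.1 := by rw [hc']; linarith
      rcases le_total (f (rhoSig P)) ((c:ℚ):ℝ) with hyc | hyc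
      · obtain ⟨j, pq', hj, hlt⟩ := escape_hi f hf hc P (u := pqb.1.1)
          (lt_of_le_of_lt hyc (by exact_mod_cast hc2))
        refine ⟨j, Or.inr ?_⟩
        show rApart (gmap f (p j).1).1 b.1
        rw [show (p j) = P.1 j from rfl, hj, hb]
        exact Or.inr hlt
      · obtain ⟨j, pq', hj, hlt⟩ := escape_lo f hf hc P (u := pqa.1.2)
          (lt_of_lt_of_le (by exact_mod_cast hc1) hyc)
        refine ⟨j, Or.inl ?_⟩
        show rApart (gmap f (p j).1).1 a.1
        rw [show (p j) = P.1 j from rfl, hj, ha]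
        exact Or.inl hlt

lemma reflects (hc : Continuous f) (p q : ℕ → ↥IsLeanDyadic)
    (hp : SigPre.IsPoint p) (hq : SigPre.IsPoint q)
    (hap : ∃ n, SigPre.apart (gmap f (p n).1) (gmap f (q n).1)) :
    ∃ n, SigPre.apart (p n) (q n) := by
  classical
  obtain ⟨n, hapn⟩ := hap
  refine ⟨n, ?_⟩
  set P : SigPre.Pt := ⟨p, hp⟩ with hP
  set Q : SigPre.Pt := ⟨q, hq⟩ with hQ
  rcases image_cases f P n with h | ⟨k, s, hks, hNE, he⟩
  · rw [show gmap f (p n).1 = noneD from h] at hapn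
    exact absurd hapn (by cases hd : (gmap f (q n).1).1 <;> simp [SigPre, PreNaturalSpace.restrict, RPre, noneD, rApart])
  rcases image_cases f Q n with h' | ⟨k', s', hks', hNE', he'⟩
  · rw [show gmap f (q n).1 = noneD from h'] at hapn
    exact absurd hapn (by cases hd : (gmap f (p n).1).1 <;> simp [SigPre, PreNaturalSpace.restrict, RPre, noneD, rApart, hd])
  rw [show gmap f (p n).1 = someD (gdot f k s).1 (gdot f k s).2 from he,
    show gmap f (q n).1 = someD (gdot f k' s').1 (gdot f k' s').2 from he'] at hapn
  have hap2 : rApart (leanIv (gdot f k s).1 (gdot f k s).2)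
      (leanIv (gdot f k' s').1 (gdot f k' s').2) := hapn
  have e1 := gdot_spec f hc hNE
  have e2 := gdot_spec f hc hNE'
  show rApart (p n).1 (q n).1
  rw [show (p n) = P.1 n from rfl, show (q n) = Q.1 n from rfl, hks, hks']
  show dhi k' s' < dlo k s ∨ dhi k s < dlo k' s'
  by_contra hcon
  push_neg at hcon
  obtain ⟨hc1, hc2⟩ := hcon
  set x : ℝ := max ((dlo k s : ℚ):ℝ) ((dlo k' s':ℚ):ℝ) with hx'
  have hx1 : x ∈ Icc ((dlo k s : ℚ):ℝ) ((dhi k s : ℚ):ℝ) := by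
    constructor
    · exact le_max_left _ _
    · apply max_le (icc_ne k s)
      exact_mod_cast hc2
  have hx2 : x ∈ Icc ((dlo k' s' : ℚ):ℝ) ((dhi k' s' : ℚ):ℝ) := by
    constructor
    · exact le_max_right _ _
    · apply max_le _ (icc_ne k' s')
      exact_mod_cast hc1
  have hE1 := mem_Ed f hc hx1
  have hE2 := mem_Ed f hc hx2
  have hM1 := margins f hc hNE
  have hM2 := margins f hc hNE'
  have hpw1 := pw_pos (s + 2)
  have hpw2 := pw_pos (s' + 2)
  have hap3 : dhi (gdot f k' s').1 (gdot f k' s').2 < dlo (gdot f k s).1 (gdot f k s).2 ∨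
      dhi (gdot f k s).1 (gdot f k s).2 < dlo (gdot f k' s').1 (gdot f k' s').2 := hap2
  rcases hap3 with hlt | hlt
  · rw [e2.2, e1.1] at hlt
    have hltr : ((Rq f k' s' : ℚ):ℝ) < ((Lq f k s : ℚ):ℝ) := by exact_mod_cast hlt
    linarith [hM1.1, hM2.2, hE1.1, hE2.2]
  · rw [e1.2, e2.1] at hlt
    have hltr : ((Rq f k s : ℚ):ℝ) < ((Lq f k' s' : ℚ):ℝ) := by exact_mod_cast hlt
    linarith [hM2.1, hM1.2, hE2.1, hE1.2]

end

end Stmt17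

/-- classical: a real function uniformly continuous on every closed
bounded interval is represented by a refinement morphism from `σ_ℝ` to `σ_ℝ`. -/
theorem stmt17 (f : ℝ → ℝ) (hf : ∀ a b : ℝ, UniformContinuousOn f (Set.Icc a b)) :
    ∃ g : RefMorphism SigPre SigPre, ∀ x : SigPre.Pt,
      rhoSig (g.pointMap x) = f (rhoSig x) := by
  have hc : Continuous f := Stmt17.cont_of f hf
  refine ⟨⟨fun d => Stmt17.gmap f d.1,
    fun p hp => Stmt17.image_isPoint f hf hc p hp,
    fun p q hp hq hap => Stmt17.reflects f hc p q hp hq hap⟩, ?_⟩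
  intro x
  apply Stmt17.rho_eq
  intro n pq h
  have h' : (Stmt17.gmap f (x.1 n).1).1 = some pq := h
  rcases Stmt17.image_cases f x n with hcase | ⟨k, s, hks, hNE, he⟩
  · rw [hcase] at h'
    exact absurd h' (by simp [Stmt17.noneD])
  · rw [he] at h'
    have hpq : pq = ⟨(Stmt17.dlo (Stmt17.gdot f k s).1 (Stmt17.gdot f k s).2,
        Stmt17.dhi (Stmt17.gdot f k s).1 (Stmt17.gdot f k s).2), dyadic_lt _ _⟩ :=
      (Option.some_injective _ h'.symm)
  -- h' : (someD a b).1 = some pq i.e. some ⟨(dlo,dhi),_⟩ = some pq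
    have hy := Stmt17.y_mem f hc x hks hNE
    have e := Stmt17.gdot_spec f hc hNE
    rw [hpq]
    constructor
    · show ((Stmt17.dlo (Stmt17.gdot f k s).1 (Stmt17.gdot f k s).2 : ℚ):ℝ) ≤ f (rhoSig x)
      rw [e.1]
      exact hy.1
    · show f (rhoSig x) ≤ ((Stmt17.dhi (Stmt17.gdot f k s).1 (Stmt17.gdot f k s).2 : ℚ):ℝ)
      rw [e.2]
      exact hy.2
end

section
/- (In classical logic.) Let 𝒱 be a spraid and let f be a map from the point set of 𝒱 to the natural reals ℛ that is continuous with respect to the natural topologies and respects ≡ (x ≡ y implies f(x) ≡_ℝ f(y)). Then there is a refinement morphism g from 𝒱 to σ_ℝ such that f(x) ≡_ℝ g(x) for all points x of 𝒱. -/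
namespace NT
open PreNaturalSpace

lemma RPre_refines : RPre.refines = rRefines := rfl
lemma RPre_apart : RPre.apart = rApart := rfl

/-- Every natural-real point eventually consists of genuine intervals. -/
lemma exists_some (w : RPre.Pt) : ∃ k pq, w.1 k = some pq := by
  obtain ⟨m, hm⟩ := w.2.shrink 0
  cases h0 : w.1 0 with
  | some pq => exact ⟨0, pq, h0⟩
  | none =>
    cases hm' : w.1 m with
    | some pq => exact ⟨m, pq, hm'⟩
    | none => exact absurd (hm'.trans h0.symm) hm.2

lemma some_mono (w : RPre.Pt) {k m : ℕ} {pq : { pq : ℚ × ℚ // pq.1 < pq.2 }}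
    (h : w.1 k = some pq) (hkm : k ≤ m) :
    ∃ pq', w.1 m = some pq' ∧ pq.1.1 ≤ pq'.1.1 ∧ pq'.1.2 ≤ pq.1.2 := by
  have href : RPre.refines (w.1 m) (w.1 k) := refines_of_le RPre w.2.mono hkm
  rw [h, RPre_refines] at href
  cases hm : w.1 m with
  | none => rw [hm] at href; exact absurd href (by simp [rRefines])
  | some pq' =>
    rw [hm] at href
    exact ⟨pq', rfl, href.1, href.2⟩

lemma cross_le (w : RPre.Pt) {n k : ℕ} {pq pq' : { pq : ℚ × ℚ // pq.1 < pq.2 }}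
    (hn : w.1 n = some pq) (hk : w.1 k = some pq') : pq.1.1 ≤ pq'.1.2 := by
  obtain ⟨A, hA, hA1, hA2⟩ := some_mono w hn (le_max_left n k)
  obtain ⟨B, hB, hB1, hB2⟩ := some_mono w hk (le_max_right n k)
  rw [hA] at hB
  obtain rfl : A = B := Option.some_injective _ hB
  exact le_trans hA1 (le_trans A.2.le hB2)

/-- The set of left endpoints of a natural real. -/
def lefts (w : RPre.Pt) : Set ℝ :=
  { r : ℝ | ∃ (n : ℕ) (pq : { pq : ℚ × ℚ // pq.1 < pq.2 }),
    w.1 n = some pq ∧ r = (pq.1.1 : ℝ) }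

lemma rhoR_eq (w : RPre.Pt) : rhoR w = sSup (lefts w) := rfl

lemma lefts_nonempty (w : RPre.Pt) : (lefts w).Nonempty := by
  obtain ⟨k, pq, h⟩ := exists_some w
  exact ⟨_, k, pq, h, rfl⟩

lemma lefts_bdd (w : RPre.Pt) {k : ℕ} {pq : { pq : ℚ × ℚ // pq.1 < pq.2 }}
    (h : w.1 k = some pq) : ∀ r ∈ lefts w, r ≤ (pq.1.2 : ℝ) := by
  rintro r ⟨n, pq', hn, rfl⟩
  exact_mod_cast cross_le w hn h

lemma lefts_bddAbove (w : RPre.Pt) : BddAbove (lefts w) := by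
  obtain ⟨k, pq, h⟩ := exists_some w
  exact ⟨_, lefts_bdd w h⟩

/-- `ρ(w)` lies in every interval of `w`. -/
lemma rhoR_mem (w : RPre.Pt) {k : ℕ} {pq : { pq : ℚ × ℚ // pq.1 < pq.2 }}
    (h : w.1 k = some pq) : (pq.1.1 : ℝ) ≤ rhoR w ∧ rhoR w ≤ (pq.1.2 : ℝ) := by
  constructor
  · exact le_csSup (lefts_bddAbove w) ⟨k, pq, h, rfl⟩
  · exact csSup_le (lefts_nonempty w) (lefts_bdd w h)

/-- The widths of the intervals of a natural real tend to 0. -/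
lemma exists_width (w : RPre.Pt) {ε : ℝ} (hε : 0 < ε) :
    ∃ k pq, w.1 k = some pq ∧ ((pq.1.2 : ℝ) - (pq.1.1 : ℝ)) < ε := by
  by_contra hcon
  push_neg at hcon
  set L := rhoR w with hL
  have hub : ∀ (k : ℕ) pq, w.1 k = some pq → L + ε ≤ (pq.1.2 : ℝ) := by
    intro k pq hk
    have : L ≤ (pq.1.2 : ℝ) - ε := by
      apply csSup_le (lefts_nonempty w)
      rintro r ⟨n, pq', hn, rfl⟩
      obtain ⟨A, hA, hA1, hA2⟩ := some_mono w hn (le_max_left n k)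
      obtain ⟨B, hB, hB1, hB2⟩ := some_mono w hk (le_max_right n k)
      rw [hA] at hB
      obtain rfl : A = B := Option.some_injective _ hB
      have h1 : (pq'.1.1 : ℝ) ≤ (A.1.1 : ℝ) := by exact_mod_cast hA1
      have h2 : ε ≤ (A.1.2 : ℝ) - (A.1.1 : ℝ) := hcon _ _ hA
      have h3 : (A.1.2 : ℝ) ≤ (pq.1.2 : ℝ) := by exact_mod_cast hB2
      linarith
    linarith
  have hLL : L < L + ε := by linarith
  obtain ⟨p, hp1, hp2⟩ := exists_rat_btwn hLL
  obtain ⟨q, hq1, hq2⟩ := exists_rat_btwn hp2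
  obtain ⟨p', hp'1, hp'2⟩ := exists_rat_btwn hq2
  obtain ⟨q', hq'1, hq'2⟩ := exists_rat_btwn hp'2
  have hpq : p < q := by exact_mod_cast hq1
  have hp'q' : p' < q' := by exact_mod_cast hq'1
  have hqp' : q < p' := by exact_mod_cast hp'1
  set A : { pq : ℚ × ℚ // pq.1 < pq.2 } := ⟨(p, q), hpq⟩
  set B : { pq : ℚ × ℚ // pq.1 < pq.2 } := ⟨(p', q'), hp'q'⟩
  have hab : RPre.apart (some A) (some B) := Or.inr hqp'
  obtain ⟨m, hm⟩ := w.2.decides _ _ hab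
  cases hw : w.1 m with
  | none =>
    rw [hw, RPre_apart] at hm
    rcases hm with h | h <;> exact h
  | some pqm =>
    rw [hw, RPre_apart] at hm
    have hl : (pqm.1.1 : ℝ) ≤ L := (rhoR_mem w hw).1
    have hu : L + ε ≤ (pqm.1.2 : ℝ) := hub _ _ hw
    rcases hm with h | h
    · rcases h with h | h
      · -- q < pqm.1.1
        have : (q : ℝ) < (pqm.1.1 : ℝ) := by exact_mod_cast h
        linarith
      · -- pqm.1.2 < p
        have : (pqm.1.2 : ℝ) < (p : ℝ) := by exact_mod_cast h
        linarith
    · rcases h with h | h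
      · -- q' < pqm.1.1
        have : (q' : ℝ) < (pqm.1.1 : ℝ) := by exact_mod_cast h
        linarith
      · -- pqm.1.2 < p'
        have : (pqm.1.2 : ℝ) < (p' : ℝ) := by exact_mod_cast h
        linarith

/-- Distinct values of `ρ` force apartness of the points. -/
lemma apart_of_rho_lt {w y : RPre.Pt} (h : rhoR w < rhoR y) : RPre.pApart w y := by
  set δ := (rhoR y - rhoR w) / 3 with hδ
  have hδ0 : 0 < δ := by simp only [hδ]; linarith
  obtain ⟨k1, pq1, h1, hw1⟩ := exists_width w hδ0
  obtain ⟨k2, pq2, h2, hw2⟩ := exists_width y hδ0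
  set N := max k1 k2
  obtain ⟨A, hA, hA1, hA2⟩ := some_mono w h1 (le_max_left k1 k2)
  obtain ⟨B, hB, hB1, hB2⟩ := some_mono y h2 (le_max_right k1 k2)
  refine ⟨N, ?_⟩
  rw [hA, hB, RPre_apart]
  right
  have hwA := rhoR_mem w hA
  have hyB := rhoR_mem y hB
  have hwidthA : (A.1.2 : ℝ) - (A.1.1 : ℝ) < δ := by
    have c1 : (pq1.1.1 : ℝ) ≤ (A.1.1 : ℝ) := by exact_mod_cast hA1
    have c2 : (A.1.2 : ℝ) ≤ (pq1.1.2 : ℝ) := by exact_mod_cast hA2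
    linarith
  have hwidthB : (B.1.2 : ℝ) - (B.1.1 : ℝ) < δ := by
    have c1 : (pq2.1.1 : ℝ) ≤ (B.1.1 : ℝ) := by exact_mod_cast hB1
    have c2 : (B.1.2 : ℝ) ≤ (pq2.1.2 : ℝ) := by exact_mod_cast hB2
    linarith
  have : (A.1.2 : ℝ) < (B.1.1 : ℝ) := by
    have := hwA.1; have := hyB.2
    simp only [hδ] at hwidthA hwidthB ⊢
    linarith
  exact_mod_cast this

lemma apart_of_rho_ne {w y : RPre.Pt} (h : rhoR w ≠ rhoR y) : RPre.pApart w y := by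
  rcases lt_or_gt_of_ne h with h | h
  · exact apart_of_rho_lt h
  · obtain ⟨n, hn⟩ := apart_of_rho_lt h
    exact ⟨n, RPre.apart_symm _ _ hn⟩

lemma rho_eq_of_equiv {w y : RPre.Pt} (h : RPre.pEquiv w y) : rhoR w = rhoR y := by
  by_contra hne
  exact h (apart_of_rho_ne hne)

/-- `ρ`-balls are open in the natural topology of ℛ. -/
lemma open_ball (t : ℝ) {ε : ℝ} (hε : 0 < ε) :
    RPre.NatOpen { w : RPre.Pt | |rhoR w - t| < ε } := by
  intro x hx y
  by_cases hxy : rhoR y = rhoR x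
  · right
    have hδ0 : 0 < ε - |rhoR x - t| := by simp only [Set.mem_setOf_eq] at hx; linarith
    obtain ⟨k, pq, hk, hwidth⟩ := exists_width y hδ0
    refine ⟨k, ?_⟩
    rintro z ⟨j, hj⟩
    have hzj : RPre.refines (z.1 j) (some pq) := hk ▸ hj.1
    rw [RPre_refines] at hzj
    cases hz : z.1 j with
    | none => rw [hz] at hzj; exact absurd hzj (by simp [rRefines])
    | some pq' =>
      rw [hz] at hzj
      have hz1 := rhoR_mem z hz
      have hy1 := rhoR_mem y hk
      have c1 : (pq.1.1 : ℝ) ≤ (pq'.1.1 : ℝ) := by exact_mod_cast hzj.1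
      have c2 : (pq'.1.2 : ℝ) ≤ (pq.1.2 : ℝ) := by exact_mod_cast hzj.2
      simp only [Set.mem_setOf_eq] at hx ⊢
      rw [abs_lt] at hx ⊢
      rw [← hxy] at hx
      have hex : rhoR x = rhoR y := hxy.symm
      have hb1 : rhoR x - t ≤ |rhoR x - t| := le_abs_self _
      have hb2 : -(rhoR x - t) ≤ |rhoR x - t| := neg_le_abs _
      constructor
      · linarith [hz1.1, hz1.2, hy1.1, hy1.2]
      · linarith [hz1.1, hz1.2, hy1.1, hy1.2]
  · left
    exact apart_of_rho_ne hxy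

section B
variable {V : Type} (P : PreNaturalSpace V) (f : P.Pt → RPre.Pt)

lemma key (hf : Continuous f) (x : P.Pt) {ε : ℝ} (hε : 0 < ε) :
    ∃ m, ∀ z : P.Pt, P.begins z.1 (x.1 m) → |rhoR (f z) - rhoR (f x)| < ε := by
  have hO : IsOpen { w : RPre.Pt | |rhoR w - rhoR (f x)| < ε } := open_ball _ hε
  have hU : P.NatOpen (f ⁻¹' { w : RPre.Pt | |rhoR w - rhoR (f x)| < ε }) :=
    hf.isOpen_preimage _ hO
  have hx : x ∈ f ⁻¹' { w : RPre.Pt | |rhoR w - rhoR (f x)| < ε } := by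
    simp only [Set.mem_preimage, Set.mem_setOf_eq, sub_self, abs_zero]
    exact hε
  rcases hU x hx x with h | ⟨m, hm⟩
  · obtain ⟨n, hn⟩ := h
    exact absurd hn (P.apart_irrefl _)
  · exact ⟨m, fun z hz => hm hz⟩

/-- The set of values of `ρ ∘ f` on the points beginning with a dot. -/
def Sset (a : V) : Set ℝ := { t | ∃ z : P.Pt, P.begins z.1 a ∧ rhoR (f z) = t }

lemma Sset_nonempty (hP : P.IsNaturalSpace) (a : V) : (Sset P f a).Nonempty := by
  obtain ⟨p, hp, hb⟩ := hP.2 a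
  exact ⟨_, ⟨p, hp⟩, hb, rfl⟩

lemma Sset_mono {a b : V} (hab : P.refines a b) : Sset P f a ⊆ Sset P f b := by
  rintro t ⟨z, hz, rfl⟩
  exact ⟨z, P.begins_mono z.2 hab hz, rfl⟩

lemma self_mem_Sset (x : P.Pt) (n : ℕ) : rhoR (f x) ∈ Sset P f (x.1 n) :=
  ⟨x, x.2.shrink n, rfl⟩

lemma Sset_small (hf : Continuous f) (x : P.Pt) {ε : ℝ} (hε : 0 < ε) (n : ℕ) :
    ∃ m, n ≤ m ∧ ∀ t ∈ Sset P f (x.1 m), |t - rhoR (f x)| < ε := by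
  obtain ⟨m0, hm0⟩ := key P f hf x hε
  obtain ⟨j, hj⟩ := x.2.shrink m0
  refine ⟨max j n, le_max_right _ _, ?_⟩
  rintro t ⟨z, hz, rfl⟩
  apply hm0
  have h1 : P.refines (x.1 (max j n)) (x.1 j) := refines_of_le P x.2.mono (le_max_left _ _)
  have h2 : P.begins z.1 (x.1 j) := P.begins_mono z.2 h1 hz
  exact P.begins_mono z.2 hj.1 h2

end B

section C
variable {V : Type} (P : PreNaturalSpace V) (f : P.Pt → RPre.Pt) (e : V → ℕ)

/-- Midpoint of the value set of a dot. -/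
noncomputable def cC (b : V) : ℝ := (sInf (Sset P f b) + sSup (Sset P f b)) / 2

/-- Eligibility of a level `L` at a dot `b`. -/
def Elig (b : V) (L : ℕ) : Prop :=
  Even L ∧ L ≤ e b ∧ BddBelow (Sset P f b) ∧ BddAbove (Sset P f b) ∧
  (sSup (Sset P f b) - sInf (Sset P f b)) * (2:ℝ)^L ≤ 1/64 ∧
  ∀ k : ℤ, 1/32 ≤ |(2:ℝ)^L * cC P f b - ((k:ℝ) + 1/2)|

/-- The chosen integer position at level `L` for dot `b`. -/
noncomputable def nn (b : V) (L : ℕ) : ℤ := ⌊(2:ℝ)^L * cC P f b + 1/2⌋ - 1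

lemma margin {b : V} {L : ℕ} (hE : Elig P f e b L) {t : ℝ} (ht : t ∈ Sset P f b) :
    ((nn P f b L : ℝ) + 67/128) ≤ (2:ℝ)^L * t ∧
      (2:ℝ)^L * t ≤ ((nn P f b L : ℝ) + 189/128) := by
  obtain ⟨-, -, hbb, hba, hd, htie⟩ := hE
  set S := Sset P f b with hS
  set c := cC P f b with hc
  set y := (2:ℝ)^L * c + 1/2 with hy
  have hfl1 : ((⌊y⌋ : ℝ)) ≤ y := Int.floor_le y
  have hfl2 : y < (⌊y⌋ : ℝ) + 1 := Int.lt_floor_add_one y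
  have hnn : (nn P f b L : ℝ) = (⌊y⌋ : ℝ) - 1 := by
    simp only [nn, ← hc, ← hy]
    push_cast
    ring
  have ht1 := htie (⌊y⌋ - 1)
  have ht2 := htie ⌊y⌋
  have habs1 : |(2:ℝ)^L * c - (((⌊y⌋ - 1 : ℤ) : ℝ) + 1/2)| =
      (2:ℝ)^L * c - (((⌊y⌋ - 1 : ℤ) : ℝ) + 1/2) := by
    apply abs_of_nonneg
    push_cast
    simp only [hy] at hfl1
    linarith
  have habs2 : |(2:ℝ)^L * c - ((⌊y⌋ : ℝ) + 1/2)| = -((2:ℝ)^L * c - ((⌊y⌋ : ℝ) + 1/2)) := by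
    apply abs_of_nonpos
    simp only [hy] at hfl2
    linarith
  rw [habs1] at ht1
  push_cast at ht1
  have htc1 : (nn P f b L : ℝ) + 17/32 ≤ (2:ℝ)^L * c := by
    rw [hnn]; linarith
  have ht2' := htie ⌊y⌋
  rw [habs2] at ht2'
  have htc2 : (2:ℝ)^L * c ≤ (nn P f b L : ℝ) + 47/32 := by
    rw [hnn]; linarith
  have hiS : sInf S ≤ t := csInf_le hbb ht
  have hsS : t ≤ sSup S := le_csSup hba ht
  have hceq : c = (sInf S + sSup S)/2 := hc
  have hp : (0:ℝ) < 2^L := by positivity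
  have hd1 : t - c ≤ (sSup S - sInf S)/2 := by rw [hceq]; linarith
  have hd2 : c - t ≤ (sSup S - sInf S)/2 := by rw [hceq]; linarith
  have hm1 := mul_le_mul_of_nonneg_left hd1 hp.le
  have hm2 := mul_le_mul_of_nonneg_left hd2 hp.le
  constructor
  · nlinarith
  · nlinarith

lemma nn_eq {b1 b2 : V} {L : ℕ} (h1 : Elig P f e b1 L) (h2 : Elig P f e b2 L)
    {t : ℝ} (ht1 : t ∈ Sset P f b1) (ht2 : t ∈ Sset P f b2) :
    nn P f b1 L = nn P f b2 L := by
  have m1 := margin P f e h1 ht1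
  have m2 := margin P f e h2 ht2
  have c1 : (nn P f b1 L : ℝ) < (nn P f b2 L : ℝ) + 1 := by linarith
  have c2 : (nn P f b2 L : ℝ) < (nn P f b1 L : ℝ) + 1 := by linarith
  have d1 : nn P f b1 L < nn P f b2 L + 1 := by exact_mod_cast c1
  have d2 : nn P f b2 L < nn P f b1 L + 1 := by exact_mod_cast c2
  omega

lemma nest {b1 b2 : V} {L1 L2 : ℕ} (h1 : Elig P f e b1 L1) (h2 : Elig P f e b2 L2)
    (hL : L1 + 2 ≤ L2) {t : ℝ} (ht1 : t ∈ Sset P f b1) (ht2 : t ∈ Sset P f b2) :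
    rRefines (leanIv (nn P f b2 L2) L2) (leanIv (nn P f b1 L1) L1) := by
  have m1 := margin P f e h1 ht1
  have m2 := margin P f e h2 ht2
  have hp1 : (0:ℝ) < 2^L1 := by positivity
  have hp2 : (0:ℝ) < 2^L2 := by positivity
  have h4 : (2:ℝ)^L1 * 4 ≤ 2^L2 := by
    calc (2:ℝ)^L1 * 4 = 2^(L1+2) := by ring
    _ ≤ 2^L2 := by
        apply pow_le_pow_right₀ one_le_two hL
  set n1 := nn P f b1 L1
  set n2 := nn P f b2 L2
  have r1 : (n1 : ℝ) / 2^L1 ≤ (n2 : ℝ) / 2^L2 := by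
    rw [div_le_div_iff₀ hp1 hp2]
    have P1 := mul_le_mul_of_nonneg_right m1.1 hp2.le
    have P2 := mul_le_mul_of_nonneg_right m2.2 hp1.le
    have h5 := mul_le_mul_of_nonneg_left h4 (show (0:ℝ) ≤ 67/128 by norm_num)
    nlinarith
  have r2 : ((n2 : ℝ) + 2) / 2^L2 ≤ ((n1 : ℝ) + 2) / 2^L1 := by
    rw [div_le_div_iff₀ hp2 hp1]
    have P1 := mul_le_mul_of_nonneg_right m2.1 hp1.le
    have P2 := mul_le_mul_of_nonneg_right m1.2 hp2.le
    have h5 := mul_le_mul_of_nonneg_left h4 (show (0:ℝ) ≤ 67/128 by norm_num)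
    nlinarith
  constructor
  · exact_mod_cast r1
  · exact_mod_cast r2

lemma mem_iv {b : V} {L : ℕ} (hE : Elig P f e b L) {t : ℝ} (ht : t ∈ Sset P f b) :
    ((nn P f b L : ℝ)) / 2^L ≤ t ∧ t ≤ ((nn P f b L : ℝ) + 2) / 2^L := by
  have m := margin P f e hE ht
  have hp : (0:ℝ) < 2^L := by positivity
  constructor
  · rw [div_le_iff₀ hp]
    nlinarith
  · rw [le_div_iff₀ hp]
    nlinarith

/-- The set of levels available at a dot (through any of its ancestors). -/
def LSet (a : V) : Set ℕ := { L | ∃ b, P.refines a b ∧ Elig P f e b L }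

lemma LSet_mono {a b : V} (hab : P.refines a b) : LSet P f e b ⊆ LSet P f e a := by
  rintro L ⟨b', h1, h2⟩
  exact ⟨b', P.refines_trans _ _ _ hab h1, h2⟩

lemma LSet_bddAbove (hfin : ∀ a : V, { b | P.refines a b }.Finite) (a : V) : BddAbove (LSet P f e a) := by
  refine ⟨(hfin a).toFinset.sup e, ?_⟩
  rintro L ⟨b, hb, hE⟩
  exact le_trans hE.2.1 (Finset.le_sup ((hfin a).mem_toFinset.mpr hb))

open Classical in
/-- The constructed map on dots. -/
noncomputable def gDot (hfin : ∀ a : V, { b | P.refines a b }.Finite) (a : V) : RDot :=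
  if h : (LSet P f e a).Nonempty then
    leanIv
      (nn P f (Classical.choose
        (show ∃ b, P.refines a b ∧ Elig P f e b (sSup (LSet P f e a)) from
          Nat.sSup_mem h (LSet_bddAbove P f e hfin a))) (sSup (LSet P f e a)))
      (sSup (LSet P f e a))
  else none

lemma gDot_spec (hfin : ∀ a : V, { b | P.refines a b }.Finite) {a : V} (h : (LSet P f e a).Nonempty) :
    ∃ b, P.refines a b ∧ Elig P f e b (sSup (LSet P f e a)) ∧
      gDot P f e hfin a = leanIv (nn P f b (sSup (LSet P f e a))) (sSup (LSet P f e a)) := by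
  have hmem := Nat.sSup_mem h (LSet_bddAbove P f e hfin a)
  refine ⟨Classical.choose hmem, (Classical.choose_spec hmem).1, (Classical.choose_spec hmem).2, ?_⟩
  rw [gDot]; exact dif_pos h

lemma gDot_none (hfin : ∀ a : V, { b | P.refines a b }.Finite) {a : V} (h : ¬ (LSet P f e a).Nonempty) : gDot P f e hfin a = none := by
  rw [gDot]; exact dif_neg h

lemma rRefines_none (x : RDot) : rRefines x none := by
  cases x <;> trivial

lemma rRefines_refl (x : RDot) : rRefines x x := by
  rcases x with _ | a <;> simp [rRefines]

lemma gDot_mono (hfin : ∀ a : V, { b | P.refines a b }.Finite) (hP : P.IsNaturalSpace) {a b : V} (hab : P.refines a b) :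
    rRefines (gDot P f e hfin a) (gDot P f e hfin b) := by
  by_cases hb : (LSet P f e b).Nonempty
  · have ha : (LSet P f e a).Nonempty := hb.mono (LSet_mono P f e hab)
    obtain ⟨wa, hwa1, hwa2, hwa3⟩ := gDot_spec P f e hfin ha
    obtain ⟨wb, hwb1, hwb2, hwb3⟩ := gDot_spec P f e hfin hb
    set La := sSup (LSet P f e a)
    set Lb := sSup (LSet P f e b)
    have hLab : Lb ≤ La := by
      apply le_csSup (LSet_bddAbove P f e hfin a)
      exact LSet_mono P f e hab (Nat.sSup_mem hb (LSet_bddAbove P f e hfin b))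
    obtain ⟨t, ht⟩ := Sset_nonempty P f hP a
    have hta : t ∈ Sset P f wa := Sset_mono P f hwa1 ht
    have htb : t ∈ Sset P f wb :=
      Sset_mono P f (P.refines_trans _ _ _ hab hwb1) ht
    rcases eq_or_lt_of_le hLab with heq | hlt
    · rw [hwa3, hwb3, ← heq]
      rw [nn_eq P f e (show Elig P f e wa Lb by rw [heq]; exact hwa2) hwb2 hta htb]
      exact rRefines_refl _
    · have hL2 : Lb + 2 ≤ La := by
        obtain ⟨ra, hra⟩ := hwa2.1
        obtain ⟨rb, hrb⟩ := hwb2.1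
        omega
      rw [hwa3, hwb3]
      exact nest P f e hwb2 hwa2 hL2 htb hta
  · rw [gDot_none P f e hfin hb]
    exact rRefines_none _

/-- There are even levels with robustly non-tied position, arbitrarily deep. -/
lemma tie_exists (r : ℝ) (T : ℕ) :
    ∃ L, T ≤ L ∧ Even L ∧ ∀ k : ℤ, 1/16 ≤ |(2:ℝ)^L * r - ((k:ℝ) + 1/2)| := by
  set T' := T + T with hT'
  by_cases h : ∀ k : ℤ, 1/16 ≤ |(2:ℝ)^T' * r - ((k:ℝ) + 1/2)|
  · exact ⟨T', by omega, ⟨T, rfl⟩, h⟩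
  · push_neg at h
    obtain ⟨k, hk⟩ := h
    refine ⟨T' + 2, by omega, ⟨T + 1, by omega⟩, ?_⟩
    intro m
    set δ := (2:ℝ)^T' * r - ((k:ℝ) + 1/2) with hδ
    have hδ' : |δ| < 1/16 := hk
    have hpow : (2:ℝ)^(T'+2) = 4 * 2^T' := by ring
    have hval : (2:ℝ)^(T'+2) * r - ((m:ℝ) + 1/2) = ((4*k + 2 - m : ℤ) : ℝ) - 1/2 + 4*δ := by
      rw [hpow]
      push_cast
      simp only [hδ]
      ring
    rw [hval]
    set j := (4*k + 2 - m : ℤ)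
    have hj : ((j:ℝ) - 1/2) ≤ -(1/2) ∨ (1/2:ℝ) ≤ (j:ℝ) - 1/2 := by
      rcases le_or_gt j 0 with hj0 | hj0
      · left
        have : (j:ℝ) ≤ 0 := by exact_mod_cast hj0
        linarith
      · right
        have : (1:ℝ) ≤ (j:ℝ) := by exact_mod_cast hj0
        linarith
    rw [abs_lt] at hδ'
    rcases hj with hj | hj
    · have hle : (j:ℝ) - 1/2 + 4*δ ≤ -(1/4) := by linarith
      calc (1:ℝ)/16 ≤ -((j:ℝ) - 1/2 + 4*δ) := by linarith
      _ ≤ |(j:ℝ) - 1/2 + 4*δ| := neg_le_abs _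
    · have hle : (1/4:ℝ) ≤ (j:ℝ) - 1/2 + 4*δ := by linarith
      calc (1:ℝ)/16 ≤ (j:ℝ) - 1/2 + 4*δ := by linarith
      _ ≤ |(j:ℝ) - 1/2 + 4*δ| := le_abs_self _

end C

section D
variable {V : Type} (P : PreNaturalSpace V) (f : P.Pt → RPre.Pt) (e : V → ℕ)

lemma pow_cast_q (L : ℕ) : (((2:ℚ)^L : ℚ) : ℝ) = (2:ℝ)^L := by push_cast; ring

lemma leanIv_inj {n n' : ℤ} {L L' : ℕ} (h : leanIv n L = leanIv n' L') :
    n = n' ∧ L = L' := by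
  have h0 := Option.some_injective _ h
  have h1 : (((n:ℚ)/2^L, ((n:ℚ)+2)/2^L) : ℚ × ℚ) = ((n':ℚ)/2^L', ((n':ℚ)+2)/2^L') :=
    congrArg Subtype.val h0
  have e1 : (n:ℚ)/2^L = (n':ℚ)/2^L' := congrArg Prod.fst h1
  have e2 : ((n:ℚ)+2)/2^L = ((n':ℚ)+2)/2^L' := congrArg Prod.snd h1
  have hp : (0:ℚ) < 2^L := by positivity
  have hp' : (0:ℚ) < 2^L' := by positivity
  have e3 : (2:ℚ)/2^L = 2/2^L' := by
    have d1 : ((n:ℚ)+2)/2^L - (n:ℚ)/2^L = 2/2^L := by ring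
    have d2 : ((n':ℚ)+2)/2^L' - (n':ℚ)/2^L' = 2/2^L' := by ring
    rw [← d1, ← d2, e1, e2]
  have e4 := (div_eq_div_iff hp.ne' hp'.ne').mp e3
  have h3 : (2:ℚ)^L = (2:ℚ)^L' := by linarith
  have hL : L = L' := by
    have hcast : ((2^L : ℕ) : ℚ) = ((2^L' : ℕ) : ℚ) := by push_cast; exact h3
    exact Nat.pow_right_injective (le_refl 2) (Nat.cast_inj.mp hcast)
  subst hL
  refine ⟨?_, rfl⟩
  field_simp at e1
  exact_mod_cast e1

/-- Along any point, arbitrarily deep levels eventually become available. -/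
lemma level_growth (he : Function.Injective e)
    (hfin : ∀ a : V, { b | P.refines a b }.Finite) (hP : P.IsNaturalSpace)
    (hf : Continuous f) (p : ℕ → V) (hp : P.IsPoint p) (T : ℕ) :
    ∃ m, (LSet P f e (p m)).Nonempty ∧ T ≤ sSup (LSet P f e (p m)) := by
  set x : P.Pt := ⟨p, hp⟩ with hx
  set r := rhoR (f x) with hr
  obtain ⟨L, hLT, hLeven, hLtie⟩ := tie_exists r T
  set ε : ℝ := ((2:ℝ)^L)⁻¹/256 with hε
  have hpL : (0:ℝ) < 2^L := by positivity
  have hε0 : 0 < ε := by positivity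
  obtain ⟨m0, -, hsmall⟩ := Sset_small P f hf x hε0 0
  -- find m ≥ m0 with L ≤ e (p m)
  have hbig : ∃ m, m0 ≤ m ∧ L ≤ e (p m) := by
    by_contra hcon
    push_neg at hcon
    set F : ℕ → ℕ := fun k => Nat.rec m0
      (fun _ prev => max (Classical.choose (hp.shrink prev)) (prev + 1)) k with hF
    have hF0 : F 0 = m0 := rfl
    have hFsucc : ∀ k, F (k+1) = max (Classical.choose (hp.shrink (F k))) (F k + 1) :=
      fun k => rfl
    have hFge : ∀ k, m0 ≤ F k := by
      intro k
      induction k with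
      | zero => exact le_refl _
      | succ k ih => rw [hFsucc]; omega
    have hFstrict : ∀ k, P.strict (p (F (k+1))) (p (F k)) := by
      intro k
      obtain hj := Classical.choose_spec (hp.shrink (F k))
      set j := Classical.choose (hp.shrink (F k))
      have hjle : j ≤ F (k+1) := by rw [hFsucc]; exact le_max_left _ _
      have href : P.refines (p (F (k+1))) (p j) := refines_of_le P hp.mono hjle
      refine ⟨P.refines_trans _ _ _ href hj.1, ?_⟩
      intro hEq
      have h1 : P.refines (p (F k)) (p j) := hEq ▸ href
      exact hj.2 (P.refines_antisymm _ _ hj.1 h1)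
    have hchain : ∀ k d, P.strict (p (F (k + d + 1))) (p (F k)) := by
      intro k d
      induction d with
      | zero => exact hFstrict k
      | succ d ih =>
        have h1 := hFstrict (k + d + 1)
        exact ⟨P.refines_trans _ _ _ h1.1 ih.1, by
          intro hEq
          have h2 : P.refines (p (F k)) (p (F (k+d+1))) := hEq ▸ h1.1
          exact ih.2 (P.refines_antisymm _ _ ih.1 h2)⟩
    have hinj : Function.Injective (fun k => p (F k)) := by
      intro k k' hkk
      have hkk' : p (F k) = p (F k') := hkk
      by_contra hne
      rcases Nat.lt_or_ge k k' with h | h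
      · obtain ⟨d, hd⟩ : ∃ d, k' = k + d + 1 := ⟨k' - k - 1, by omega⟩
        exact (hchain k d).2 (by rw [← hd]; exact hkk'.symm)
      · have h' : k' < k := by omega
        obtain ⟨d, hd⟩ : ∃ d, k = k' + d + 1 := ⟨k - k' - 1, by omega⟩
        exact (hchain k' d).2 (by rw [← hd]; exact hkk')
    have hmem : ∀ k, p (F k) ∈ e ⁻¹' (Set.Iio L) := by
      intro k
      exact hcon (F k) (hFge k)
    have hfin2 : (e ⁻¹' (Set.Iio L)).Finite :=
      Set.Finite.preimage (Set.injOn_of_injective he) (Set.finite_Iio _)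
    exact (Set.infinite_of_injective_forall_mem hinj hmem) hfin2
  obtain ⟨m, hm0m, hLe⟩ := hbig
  -- Sset (p m) is within ε of r
  have hsub : Sset P f (p m) ⊆ Sset P f (p m0) :=
    Sset_mono P f (refines_of_le P hp.mono hm0m)
  have hclose : ∀ t ∈ Sset P f (p m), r - ε ≤ t ∧ t ≤ r + ε := by
    intro t ht
    have := hsmall t (hsub ht)
    rw [abs_lt] at this
    constructor <;> linarith
  have hne : (Sset P f (p m)).Nonempty := Sset_nonempty P f hP _
  have hbb : BddBelow (Sset P f (p m)) := ⟨r - ε, fun t ht => (hclose t ht).1⟩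
  have hba : BddAbove (Sset P f (p m)) := ⟨r + ε, fun t ht => (hclose t ht).2⟩
  have hsup : sSup (Sset P f (p m)) ≤ r + ε := csSup_le hne (fun t ht => (hclose t ht).2)
  have hinf : r - ε ≤ sInf (Sset P f (p m)) := le_csInf hne (fun t ht => (hclose t ht).1)
  have hinfsup : sInf (Sset P f (p m)) ≤ sSup (Sset P f (p m)) := by
    obtain ⟨t, ht⟩ := hne
    exact le_trans (csInf_le hbb ht) (le_csSup hba ht)
  have hElig : Elig P f e (p m) L := by
    refine ⟨hLeven, hLe, hbb, hba, ?_, ?_⟩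
    · have h1 : sSup (Sset P f (p m)) - sInf (Sset P f (p m)) ≤ 2*ε := by linarith
      calc (sSup (Sset P f (p m)) - sInf (Sset P f (p m))) * (2:ℝ)^L
          ≤ 2*ε * (2:ℝ)^L := by
            apply mul_le_mul_of_nonneg_right h1 hpL.le
      _ ≤ 1/64 := by
            have hε2 : 2*ε*(2:ℝ)^L = 1/128 := by
              rw [hε]; field_simp; ring
            rw [hε2]; norm_num
    · intro k
      have h1 := hLtie k
      have hc : |r - cC P f (p m)| ≤ ε := by
        have : cC P f (p m) = (sInf (Sset P f (p m)) + sSup (Sset P f (p m)))/2 := rfl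
        rw [abs_le]
        constructor <;> (rw [this]; linarith)
      have h2 : |(2:ℝ)^L * r - (2:ℝ)^L * cC P f (p m)| ≤ 1/256 := by
        rw [← mul_sub, abs_mul, abs_of_pos hpL]
        calc (2:ℝ)^L * |r - cC P f (p m)| ≤ (2:ℝ)^L * ε :=
              mul_le_mul_of_nonneg_left hc hpL.le
        _ = 1/256 := by
              rw [hε, ← mul_div_assoc, mul_inv_cancel₀ (ne_of_gt hpL)]
      have h3 : |(2:ℝ)^L * r - ((k:ℝ) + 1/2)| ≤
          |(2:ℝ)^L * cC P f (p m) - ((k:ℝ) + 1/2)| +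
            |(2:ℝ)^L * r - (2:ℝ)^L * cC P f (p m)| := by
        calc |(2:ℝ)^L * r - ((k:ℝ) + 1/2)|
            = |((2:ℝ)^L * cC P f (p m) - ((k:ℝ) + 1/2)) +
                ((2:ℝ)^L * r - (2:ℝ)^L * cC P f (p m))| := by congr 1; ring
        _ ≤ _ := abs_add_le _ _
      linarith
  have hmemL : L ∈ LSet P f e (p m) := ⟨p m, P.refines_refl _, hElig⟩
  refine ⟨m, ⟨L, hmemL⟩, ?_⟩
  calc T ≤ L := hLT
  _ ≤ sSup (LSet P f e (p m)) := le_csSup (LSet_bddAbove P f e hfin _) hmemL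

end D

end NT

/-- classical: a continuous `≡`-respecting map from a spraid `𝒱` to
the natural reals `ℛ` is represented, up to `≡_ℝ`, by a refinement morphism from
`𝒱` to `σ_ℝ`. -/
theorem stmt19 {V : Type} (P : PreNaturalSpace V) (hP : P.IsNaturalSpace)
    (hsp : P.IsSpraid) (f : P.Pt → RPre.Pt) (hf : Continuous f)
    (hresp : ∀ x y, P.pEquiv x y → RPre.pEquiv (f x) (f y)) :
    ∃ g : RefMorphism P SigPre, ∀ x : P.Pt,
      ¬ ∃ k, rApart ((f x).1 k) (((g.pointMap x).1 k) : RDot) := by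
  classical
  obtain ⟨e, he⟩ := (countable_iff_exists_injective V).mp P.countable'
  obtain ⟨mx, hmx, hfin, -⟩ := hsp.1
  have hlean : ∀ a : V, NT.gDot P f e hfin a ∈ IsLeanDyadic := by
    intro a
    by_cases h : (NT.LSet P f e a).Nonempty
    · obtain ⟨b, -, -, hb3⟩ := NT.gDot_spec P f e hfin h
      rw [hb3]; exact Or.inr ⟨_, _, rfl⟩
    · rw [NT.gDot_none P f e hfin h]; exact Or.inl rfl
  have hpowδ : ∀ δ : ℝ, 0 < δ → ∃ T : ℕ, 2 * ((2:ℝ)^T)⁻¹ < δ := by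
    intro δ hδ
    obtain ⟨T, hT⟩ := pow_unbounded_of_one_lt (2/δ) one_lt_two
    refine ⟨T, ?_⟩
    have hp : (0:ℝ) < 2^T := by positivity
    rw [div_lt_iff₀ hδ] at hT
    rw [show (2:ℝ)*((2:ℝ)^T)⁻¹ = 2/2^T by rw [div_eq_mul_inv], div_lt_iff₀ hp]
    linarith
  have hLmono : ∀ (p : ℕ → V), P.IsPoint p → ∀ {k m : ℕ}, k ≤ m →
      NT.LSet P f e (p k) ⊆ NT.LSet P f e (p m) := by
    intro p hp k m h
    exact NT.LSet_mono P f e (PreNaturalSpace.refines_of_le P hp.mono h)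
  have hgmono : ∀ (p : ℕ → V), P.IsPoint p → ∀ {k m : ℕ}, k ≤ m →
      rRefines (NT.gDot P f e hfin (p m)) (NT.gDot P f e hfin (p k)) := by
    intro p hp k m h
    exact NT.gDot_mono P f e hfin hP (PreNaturalSpace.refines_of_le P hp.mono h)
  have hfind : ∀ (p : ℕ → V) (hp : P.IsPoint p) (T n0 : ℕ),
      ∃ m, n0 ≤ m ∧ ∃ (n1 : ℤ) (L1 : ℕ), NT.gDot P f e hfin (p m) = leanIv n1 L1 ∧
        T ≤ L1 ∧ ((n1:ℝ))/2^L1 ≤ rhoR (f ⟨p, hp⟩) ∧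
        rhoR (f ⟨p, hp⟩) ≤ ((n1:ℝ)+2)/2^L1 := by
    intro p hp T n0
    obtain ⟨m, hne, hT⟩ := NT.level_growth P f e he hfin hP hf p hp T
    have hsub : NT.LSet P f e (p m) ⊆ NT.LSet P f e (p (max m n0)) :=
      hLmono p hp (le_max_left _ _)
    have hneM : (NT.LSet P f e (p (max m n0))).Nonempty := hne.mono hsub
    have hTM : T ≤ sSup (NT.LSet P f e (p (max m n0))) :=
      le_trans hT (csSup_le_csSup (NT.LSet_bddAbove P f e hfin _) hne hsub)
    have htmem : rhoR (f ⟨p, hp⟩) ∈ NT.Sset P f (p (max m n0)) :=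
      NT.self_mem_Sset P f ⟨p, hp⟩ (max m n0)
    obtain ⟨b, hb1, hb2, hb3⟩ := NT.gDot_spec P f e hfin hneM
    have htb : rhoR (f ⟨p, hp⟩) ∈ NT.Sset P f b := NT.Sset_mono P f hb1 htmem
    have hmem := NT.mem_iv P f e hb2 htb
    exact ⟨max m n0, le_max_right _ _, _, _, hb3, le_trans hTM (le_of_eq rfl), hmem.1, hmem.2⟩
  refine ⟨⟨fun a => ⟨NT.gDot P f e hfin a, hlean a⟩, ?_, ?_⟩, ?_⟩
  · -- maps points to points
    intro p hp
    refine ⟨fun n => ?_, fun n => ?_, fun A B hAB => ?_⟩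
    · exact hgmono p hp (Nat.le_succ n)
    · -- shrink
      by_cases hn : (NT.LSet P f e (p n)).Nonempty
      · obtain ⟨b, hb1, hb2, hb3⟩ := NT.gDot_spec P f e hfin hn
        obtain ⟨m, hmge, n1, L1, hiv, hT1, -, -⟩ :=
          hfind p hp (sSup (NT.LSet P f e (p n)) + 1) n
        refine ⟨m, hgmono p hp hmge, ?_⟩
        intro hEq
        have hval : NT.gDot P f e hfin (p m) = NT.gDot P f e hfin (p n) :=
          congrArg Subtype.val hEq
        rw [hiv, hb3] at hval
        have := (NT.leanIv_inj hval).2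
        omega
      · obtain ⟨m, hmge, n1, L1, hiv, -, -, -⟩ := hfind p hp 0 n
        refine ⟨m, hgmono p hp hmge, ?_⟩
        intro hEq
        have hval : NT.gDot P f e hfin (p m) = NT.gDot P f e hfin (p n) :=
          congrArg Subtype.val hEq
        rw [NT.gDot_none P f e hfin hn, hiv] at hval
        simp [leanIv] at hval
    · -- decides
      have hAB' : rApart A.1 B.1 := hAB
      set r := rhoR (f ⟨p, hp⟩) with hrr
      have hgetsmall : ∀ δ : ℝ, 0 < δ → ∃ (m : ℕ) (n1 : ℤ) (L1 : ℕ),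
          NT.gDot P f e hfin (p m) = leanIv n1 L1 ∧
          (n1:ℝ)/2^L1 ≤ r ∧ r ≤ ((n1:ℝ)+2)/2^L1 ∧
          ((n1:ℝ)+2)/2^L1 - (n1:ℝ)/2^L1 < δ := by
        intro δ hδ
        obtain ⟨T, hT⟩ := hpowδ δ hδ
        obtain ⟨m, -, n1, L1, hiv, hTL, h1, h2⟩ := hfind p hp T 0
        refine ⟨m, n1, L1, hiv, h1, h2, ?_⟩
        have heq : ((n1:ℝ)+2)/2^L1 - (n1:ℝ)/2^L1 = 2*((2:ℝ)^L1)⁻¹ := by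
          field_simp
          ring
        rw [heq]
        have hle : ((2:ℝ)^L1)⁻¹ ≤ ((2:ℝ)^T)⁻¹ :=
          inv_anti₀ (by positivity) (pow_le_pow_right₀ one_le_two hTL)
        linarith
      rcases hA : A.1 with _ | pqa
      · rw [hA] at hAB'
        rcases hB : B.1 with _ | pqb <;> rw [hB] at hAB' <;>
          exact absurd hAB' (by simp [rApart])
      rcases hB : B.1 with _ | pqb
      · rw [hA, hB] at hAB'
        exact absurd hAB' (by simp [rApart])
      rw [hA, hB] at hAB'
      have hcases : (pqb.1.2 < pqa.1.1) ∨ (pqa.1.2 < pqb.1.1) := hAB'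
      rcases hcases with hc | hc
      · -- B lies to the left of A
        have hcR : (pqb.1.2:ℝ) < (pqa.1.1:ℝ) := by exact_mod_cast hc
        by_cases hr1 : r ≤ ((pqb.1.2 : ℚ) : ℝ)
        · have hδ : (0:ℝ) < (pqa.1.1:ℝ) - r := by linarith
          obtain ⟨m, n1, L1, hiv, h1, h2, h3⟩ := hgetsmall _ hδ
          refine ⟨m, Or.inl ?_⟩
          show rApart (NT.gDot P f e hfin (p m)) A.1
          rw [hiv, hA]
          refine Or.inr ?_
          have : ((n1:ℝ)+2)/2^L1 < (pqa.1.1:ℝ) := by linarith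
          exact_mod_cast this
        · push_neg at hr1
          have hδ : (0:ℝ) < r - (pqb.1.2:ℝ) := by linarith
          obtain ⟨m, n1, L1, hiv, h1, h2, h3⟩ := hgetsmall _ hδ
          refine ⟨m, Or.inr ?_⟩
          show rApart (NT.gDot P f e hfin (p m)) B.1
          rw [hiv, hB]
          refine Or.inl ?_
          have : (pqb.1.2:ℝ) < (n1:ℝ)/2^L1 := by linarith
          exact_mod_cast this
      · -- A lies to the left of B
        have hcR : (pqa.1.2:ℝ) < (pqb.1.1:ℝ) := by exact_mod_cast hc
        by_cases hr1 : r ≤ ((pqa.1.2 : ℚ) : ℝ)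
        · have hδ : (0:ℝ) < (pqb.1.1:ℝ) - r := by linarith
          obtain ⟨m, n1, L1, hiv, h1, h2, h3⟩ := hgetsmall _ hδ
          refine ⟨m, Or.inr ?_⟩
          show rApart (NT.gDot P f e hfin (p m)) B.1
          rw [hiv, hB]
          refine Or.inr ?_
          have : ((n1:ℝ)+2)/2^L1 < (pqb.1.1:ℝ) := by linarith
          exact_mod_cast this
        · push_neg at hr1
          have hδ : (0:ℝ) < r - (pqa.1.2:ℝ) := by linarith
          obtain ⟨m, n1, L1, hiv, h1, h2, h3⟩ := hgetsmall _ hδ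
          refine ⟨m, Or.inl ?_⟩
          show rApart (NT.gDot P f e hfin (p m)) A.1
          rw [hiv, hA]
          refine Or.inl ?_
          have : (pqa.1.2:ℝ) < (n1:ℝ)/2^L1 := by linarith
          exact_mod_cast this
  · -- reflects apartness
    intro p q hp hq hex
    by_contra hno
    push_neg at hno
    obtain ⟨n, hn⟩ := hex
    have hn' : rApart (NT.gDot P f e hfin (p n)) (NT.gDot P f e hfin (q n)) := hn
    have hEq : P.pEquiv ⟨p, hp⟩ ⟨q, hq⟩ := by
      rintro ⟨k, hk⟩
      exact hno k hk
    have hre : rhoR (f ⟨p, hp⟩) = rhoR (f ⟨q, hq⟩) := NT.rho_eq_of_equiv (hresp _ _ hEq)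
    by_cases h1 : (NT.LSet P f e (p n)).Nonempty
    · by_cases h2 : (NT.LSet P f e (q n)).Nonempty
      · obtain ⟨b1, hb11, hb12, hb13⟩ := NT.gDot_spec P f e hfin h1
        obtain ⟨b2, hb21, hb22, hb23⟩ := NT.gDot_spec P f e hfin h2
        have ht1 : rhoR (f ⟨p,hp⟩) ∈ NT.Sset P f b1 :=
          NT.Sset_mono P f hb11 (NT.self_mem_Sset P f ⟨p,hp⟩ n)
        have ht2 : rhoR (f ⟨p,hp⟩) ∈ NT.Sset P f b2 := by
          rw [hre]; exact NT.Sset_mono P f hb21 (NT.self_mem_Sset P f ⟨q,hq⟩ n)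
        have m1 := NT.mem_iv P f e hb12 ht1
        have m2 := NT.mem_iv P f e hb22 ht2
        rw [hb13, hb23] at hn'
        have hn2 : ((NT.nn P f b2 (sSup (NT.LSet P f e (q n))) : ℚ)+2)/2^(sSup (NT.LSet P f e (q n)))
              < (NT.nn P f b1 (sSup (NT.LSet P f e (p n))) : ℚ)/2^(sSup (NT.LSet P f e (p n))) ∨
            ((NT.nn P f b1 (sSup (NT.LSet P f e (p n))) : ℚ)+2)/2^(sSup (NT.LSet P f e (p n)))
              < (NT.nn P f b2 (sSup (NT.LSet P f e (q n))) : ℚ)/2^(sSup (NT.LSet P f e (q n))) := hn'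
        rcases hn2 with h | h
        · have hR : ((NT.nn P f b2 (sSup (NT.LSet P f e (q n))) : ℝ)+2)/2^(sSup (NT.LSet P f e (q n)))
              < (NT.nn P f b1 (sSup (NT.LSet P f e (p n))) : ℝ)/2^(sSup (NT.LSet P f e (p n))) := by
            exact_mod_cast h
          linarith [m1.1, m2.2]
        · have hR : ((NT.nn P f b1 (sSup (NT.LSet P f e (p n))) : ℝ)+2)/2^(sSup (NT.LSet P f e (p n)))
              < (NT.nn P f b2 (sSup (NT.LSet P f e (q n))) : ℝ)/2^(sSup (NT.LSet P f e (q n))) := by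
            exact_mod_cast h
          linarith [m1.2, m2.1]
      · rw [NT.gDot_none P f e hfin h2] at hn'
        rcases hg : NT.gDot P f e hfin (p n) with _ | v <;> rw [hg] at hn' <;>
          exact absurd hn' (by simp [rApart])
    · rw [NT.gDot_none P f e hfin h1] at hn'
      rcases hg : NT.gDot P f e hfin (q n) with _ | v <;> rw [hg] at hn' <;>
        exact absurd hn' (by simp [rApart])
  · -- the representation property
    intro x hk
    obtain ⟨k, hk⟩ := hk
    have hk' : rApart ((f x).1 k) (NT.gDot P f e hfin (x.1 k)) := hk
    rcases hf1 : (f x).1 k with _ | pqf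
    · rw [hf1] at hk'
      rcases hg : NT.gDot P f e hfin (x.1 k) with _ | v <;> rw [hg] at hk' <;>
        exact absurd hk' (by simp [rApart])
    rw [hf1] at hk'
    have hm := NT.rhoR_mem (f x) hf1
    by_cases h1 : (NT.LSet P f e (x.1 k)).Nonempty
    · obtain ⟨b, hb1, hb2, hb3⟩ := NT.gDot_spec P f e hfin h1
      have ht : rhoR (f x) ∈ NT.Sset P f b :=
        NT.Sset_mono P f hb1 (NT.self_mem_Sset P f x k)
      have m1 := NT.mem_iv P f e hb2 ht
      rw [hb3] at hk'
      have hn2 : ((NT.nn P f b (sSup (NT.LSet P f e (x.1 k))) : ℚ)+2)/2^(sSup (NT.LSet P f e (x.1 k)))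
            < pqf.1.1 ∨
          pqf.1.2 < (NT.nn P f b (sSup (NT.LSet P f e (x.1 k))) : ℚ)/2^(sSup (NT.LSet P f e (x.1 k))) := hk'
      rcases hn2 with h | h
      · have hR : ((NT.nn P f b (sSup (NT.LSet P f e (x.1 k))) : ℝ)+2)/2^(sSup (NT.LSet P f e (x.1 k)))
            < (pqf.1.1 : ℝ) := by exact_mod_cast h
        linarith [m1.2, hm.1]
      · have hR : (pqf.1.2 : ℝ) <
            (NT.nn P f b (sSup (NT.LSet P f e (x.1 k))) : ℝ)/2^(sSup (NT.LSet P f e (x.1 k))) := by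
          exact_mod_cast h
        linarith [m1.1, hm.2]
    · rw [NT.gDot_none P f e hfin h1] at hk'
      exact absurd hk' (by simp [rApart])
end
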